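/- arXiv:2212.11884 — 4 statements merged into one kernel-verified Lean document; each statement's English description precedes it below -/
import Mathlib

section
/- Comparison principle for the heat equation: fix a continuous f : ℝ^d → ℝ with |f(x)| → 0 as |x| → ∞, fix T > 0, and let u, v : ℝ^d × [0,∞) → ℝ be continuous, twice continuously differentiable in space and once continuously differentiable in time on ℝ^d × (0,∞), and satisfy limsup_{|x|→∞} sup_{t∈[0,T]} max(|u(x,t)|, |v(x,t)|) = 0. If u(x,0) = f(x) = v(x,0) for all x ∈ ℝ^d, ∂_t u ≥ (1/2) tr(Σ D²u) on ℝ^d × (0,∞), and ∂_t v ≤ (1/2) tr(Σ D²v) on ℝ^d × (0,∞), then u ≥ v on ℝ^d × [0,T]. -/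
open MeasureTheory ProbabilityTheory Filter Topology Set

noncomputable section

abbrev Euc (d : ℕ) : Type := EuclideanSpace ℝ (Fin d)

/-- The quadratic form `aᵀ S a`. -/
def quadForm {d : ℕ} (S : Matrix (Fin d) (Fin d) ℝ) (a : Euc d) : ℝ :=
  ∑ i, ∑ j, a i * S i j * a j

/-- `ν` is the centered Gaussian measure on `ℝ^d` with covariance matrix `S`:
every linear functional pushes forward to a one-dimensional centered Gaussian with
the appropriate variance. -/
def IsCenteredGaussianMeasure {d : ℕ} (S : Matrix (Fin d) (Fin d) ℝ)
    (ν : Measure (Euc d)) : Prop :=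
  IsProbabilityMeasure ν ∧
  ∀ a : Euc d, ν.map (fun x => ∑ i, a i * x i) = gaussianReal 0 (quadForm S a).toNNReal

/-- The covariance matrix of a random vector `Y`. -/
def covMatrix {d : ℕ} {Ω : Type} [MeasurableSpace Ω] (μ : Measure Ω) (Y : Ω → Euc d) :
    Matrix (Fin d) (Fin d) ℝ :=
  Matrix.of fun i j => ∫ ω, Y ω i * Y ω j ∂μ

/-- The i.i.d., centered, square-integrable hypothesis, with covariance matrix `S`. -/
structure IsIIDCentered {d : ℕ} {Ω : Type} [MeasurableSpace Ω] (μ : Measure Ω)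
    (X : ℕ → Ω → Euc d) (S : Matrix (Fin d) (Fin d) ℝ) : Prop where
  meas : ∀ i, Measurable (X i)
  indep : iIndepFun X μ
  ident : ∀ i, μ.map (X i) = μ.map (X 0)
  sqInt : MemLp (X 0) 2 μ
  centered : ∫ ω, X 0 ω ∂μ = 0
  covEq : covMatrix μ (X 0) = S

/-- Partial sums `S_n = X_1 + ⋯ + X_n`. -/
def pSum {d : ℕ} {Ω : Type} (X : ℕ → Ω → Euc d) (n : ℕ) (ω : Ω) : Euc d :=
  ∑ i ∈ Finset.range n, X i ω

/-- `f ∈ C^k(ℝ^d)`: all derivatives up to order `k` exist and are uniformly bounded. -/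
def MemCk {d : ℕ} (k : ℕ) (f : Euc d → ℝ) : Prop :=
  ContDiff ℝ k f ∧ ∀ i ≤ k, ∃ M, ∀ x, ‖iteratedFDeriv ℝ i f x‖ ≤ M

/-- The `C^k` norm of `f`: the sum of the sup norms of the derivatives of order up to `k`. -/
def ckNorm {d : ℕ} (k : ℕ) (f : Euc d → ℝ) : ℝ :=
  ∑ i ∈ Finset.range (k + 1), ⨆ x, ‖iteratedFDeriv ℝ i f x‖

/-- The Hessian matrix (in space) of `f` at `x`. -/
def hessian {d : ℕ} (f : Euc d → ℝ) (x : Euc d) : Matrix (Fin d) (Fin d) ℝ :=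
  Matrix.of fun i j =>
    iteratedFDeriv ℝ 2 f x ![EuclideanSpace.single i 1, EuclideanSpace.single j 1]

/-- The discrete scheme `u_n(x,t) = E[f(x + S_{⌊nt⌋}/√n)]`. -/
def schemeU {d : ℕ} {Ω : Type} [MeasurableSpace Ω] (μ : Measure Ω) (X : ℕ → Ω → Euc d)
    (f : Euc d → ℝ) (n : ℕ) (x : Euc d) (t : ℝ) : ℝ :=
  ∫ ω, f (x + (Real.sqrt n)⁻¹ • pSum X ⌊(n : ℝ) * t⌋₊ ω) ∂μ

/-- The heat semigroup `u(x,t) = E[f(x + √t ξ)]`, where `ξ ∼ ν`. -/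
def heatU {d : ℕ} (ν : Measure (Euc d)) (f : Euc d → ℝ) (x : Euc d) (t : ℝ) : ℝ :=
  ∫ y, f (x + Real.sqrt t • y) ∂ν

/-- `u` is twice continuously differentiable in space and once continuously differentiable in
time on `ℝ^d × (0,∞)`. -/
def IsC21 {d : ℕ} (u : Euc d → ℝ → ℝ) : Prop :=
  (∀ t > (0:ℝ), ContDiff ℝ 2 (fun x => u x t)) ∧
  (∀ x : Euc d, ContDiffOn ℝ 1 (u x) (Set.Ioi 0))



section AuxComparison

private lemma aux_secondDeriv_nonpos (φ : ℝ → ℝ) (hφ : ContDiff ℝ 2 φ)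
    (hmax : ∀ s, φ s ≤ φ 0) : deriv (deriv φ) 0 ≤ 0 := by
  by_contra hcon
  push_neg at hcon
  have h2 : ContDiff ℝ 1 (deriv φ) := by
    have := (contDiff_succ_iff_deriv (n := 1)).mp (by exact_mod_cast hφ)
    exact this.2.2
  have hc2 : Continuous (deriv (deriv φ)) := h2.continuous_deriv le_rfl
  have hev : ∀ᶠ s in 𝓝 (0:ℝ), 0 < deriv (deriv φ) s :=
    (hc2.tendsto 0).eventually (eventually_gt_nhds hcon)
  obtain ⟨δ, hδ, hpos⟩ := Metric.eventually_nhds_iff.mp hev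
  have hδ2 : 0 < δ/2 := by linarith
  have hmono1 : StrictMonoOn (deriv φ) (Icc 0 (δ/2)) := by
    apply strictMonoOn_of_deriv_pos (convex_Icc _ _) (h2.continuous.continuousOn)
    intro s hs
    rw [interior_Icc] at hs
    apply hpos
    rw [Real.dist_eq, sub_zero, abs_of_pos hs.1]
    linarith [hs.2]
  have hd0 : deriv φ 0 = 0 := by
    have : IsLocalMax φ 0 := Filter.Eventually.of_forall hmax
    exact this.deriv_eq_zero
  have hdpos : ∀ s ∈ Ioo (0:ℝ) (δ/2), 0 < deriv φ s := by
    intro s hs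
    have := hmono1 (by constructor <;> [rfl; positivity] : (0:ℝ) ∈ Icc 0 (δ/2))
      ⟨hs.1.le, hs.2.le⟩ hs.1
    rwa [hd0] at this
  have hmono2 : StrictMonoOn φ (Icc 0 (δ/2)) := by
    apply strictMonoOn_of_deriv_pos (convex_Icc _ _)
      (hφ.continuous.continuousOn)
    intro s hs
    rw [interior_Icc] at hs
    exact hdpos s hs
  have : φ 0 < φ (δ/4) :=
    hmono2 ⟨le_rfl, hδ2.le⟩ ⟨by linarith, by linarith⟩ (by linarith)
  exact absurd (hmax (δ/4)) (not_le.mpr this)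

private lemma aux_euc_decomp {d : ℕ} (a : Euc d) :
    a = ∑ i, a i • EuclideanSpace.single i (1:ℝ) := by
  have h := (EuclideanSpace.basisFun (Fin d) ℝ).sum_repr a
  simp only [EuclideanSpace.basisFun_repr, EuclideanSpace.basisFun_apply] at h
  exact h.symm

private lemma aux_bilin_expand' {d : ℕ} (B : Euc d →L[ℝ] Euc d →L[ℝ] ℝ) (x y : Euc d) :
    B x y = ∑ k, ∑ l, x k * y l *
      B (EuclideanSpace.single k 1) (EuclideanSpace.single l 1) := by
  conv_lhs => rw [aux_euc_decomp x]
  conv_lhs => rw [aux_euc_decomp y]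
  simp only [map_sum, ContinuousLinearMap.sum_apply]
  rw [Finset.sum_comm]
  exact Finset.sum_congr rfl fun _ _ => Finset.sum_congr rfl fun _ _ => by
    simp only [_root_.map_smul, ContinuousLinearMap.smul_apply, smul_eq_mul]; ring

open scoped MatrixOrder in
private lemma aux_trace_nonpos {d : ℕ} {S H : Matrix (Fin d) (Fin d) ℝ} (hS : S.PosSemidef)
    (hH : ∀ a : Euc d, (∑ k, ∑ l, a k * a l * H k l) ≤ 0) :
    Matrix.trace (S * H) ≤ 0 := by
  obtain ⟨R, hRh, hRR⟩ : ∃ R : Matrix (Fin d) (Fin d) ℝ, R.IsHermitian ∧ R * R = S :=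
    ⟨CFC.sqrt S, by simpa using (CFC.sqrt_nonneg S).1, CFC.sqrt_mul_sqrt_self S hS.nonneg⟩
  have hRsymm : ∀ i j, R i j = R j i := fun i j => by
    conv_lhs => rw [← hRh]
    simp [Matrix.conjTranspose_apply]
  have h1 : Matrix.trace (S * H) = Matrix.trace ((R * H) * R) := by
    rw [← hRR, Matrix.mul_assoc, Matrix.trace_mul_comm]
  rw [h1, Matrix.trace]
  apply Finset.sum_nonpos
  intro j _
  have key := hH ((WithLp.equiv 2 (Fin d → ℝ)).symm (fun k => R j k))
  simp only [WithLp.equiv_symm_apply, PiLp.toLp_apply] at key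
  calc ((R * H) * R).diag j = ∑ l, (∑ k, R j k * H k l) * R l j := by
        simp [Matrix.diag, Matrix.mul_apply]
    _ = ∑ l, ∑ k, R j k * H k l * R l j := by
        refine Finset.sum_congr rfl fun l _ => ?_
        rw [Finset.sum_mul]
    _ = ∑ k, ∑ l, R j k * R j l * H k l := by
        rw [Finset.sum_comm]
        refine Finset.sum_congr rfl fun k _ => Finset.sum_congr rfl fun l _ => ?_
        rw [hRsymm l j]; ring
    _ ≤ 0 := key

end AuxComparison

/-- **Comparison principle for the heat equation**: if `u` is a supersolution and `v` a
subsolution of `∂ₜ w = ½ tr(Σ D²w)` on `ℝ^d × (0,∞)`, both continuous on `ℝ^d × [0,∞)`,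
vanishing at spatial infinity uniformly on `[0,T]` and agreeing with `f` at `t = 0`,
then `u ≥ v` on `ℝ^d × [0,T]`. -/
theorem heat_comparison
    {d : ℕ} (S : Matrix (Fin d) (Fin d) ℝ) (hS : S.PosSemidef)
    (f : Euc d → ℝ) (hfc : Continuous f) (hf0 : Tendsto f (cocompact (Euc d)) (𝓝 0))
    (T : ℝ) (hT : 0 < T) (u v : Euc d → ℝ → ℝ)
    (hu_cont : ContinuousOn (fun p : Euc d × ℝ => u p.1 p.2) (Set.univ ×ˢ Set.Ici 0))
    (hv_cont : ContinuousOn (fun p : Euc d × ℝ => v p.1 p.2) (Set.univ ×ˢ Set.Ici 0))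
    (hu_reg : IsC21 u) (hv_reg : IsC21 v)
    (hvanish : ∀ ε > (0:ℝ), ∃ R : ℝ, ∀ x : Euc d, R ≤ ‖x‖ →
      ∀ t ∈ Set.Icc 0 T, max |u x t| |v x t| < ε)
    (hu0 : ∀ x, u x 0 = f x) (hv0 : ∀ x, v x 0 = f x)
    (hu_super : ∀ x : Euc d, ∀ t > (0:ℝ),
      Matrix.trace (S * hessian (fun y => u y t) x) / 2 ≤ deriv (u x) t)
    (hv_sub : ∀ x : Euc d, ∀ t > (0:ℝ),
      deriv (v x) t ≤ Matrix.trace (S * hessian (fun y => v y t) x) / 2) :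
    ∀ x : Euc d, ∀ t ∈ Set.Icc 0 T, v x t ≤ u x t := by
  have key : ∀ ε > (0:ℝ), ∀ x : Euc d, ∀ t ∈ Set.Icc 0 T, v x t - u x t - ε * t ≤ 0 := by
    intro ε hε
    by_contra hcon
    push_neg at hcon
    obtain ⟨x₁, t₁, ht₁, hgt⟩ := hcon
    set W : Euc d × ℝ → ℝ := fun p => v p.1 p.2 - u p.1 p.2 - ε * p.2 with hWdef
    have hWapp : ∀ (x : Euc d) (t : ℝ), W (x, t) = v x t - u x t - ε * t :=
      fun x t => by rw [hWdef]
    clear_value W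
    obtain ⟨c, hcdef, hc0⟩ : ∃ c : ℝ, c = W (x₁, t₁) ∧ 0 < c :=
      ⟨W (x₁, t₁), rfl, by rw [hWapp]; exact hgt⟩
    obtain ⟨R, hR⟩ := hvanish (c/2) (by positivity)
    have hout : ∀ x : Euc d, R ≤ ‖x‖ → ∀ t ∈ Set.Icc 0 T, W (x, t) < c := by
      intro x hx t ht
      have h1 := hR x hx t ht
      rw [max_lt_iff] at h1
      have h2 : v x t ≤ |v x t| := le_abs_self _
      have h3 : -u x t ≤ |u x t| := neg_le_abs _
      have h4 : 0 ≤ ε * t := mul_nonneg hε.le ht.1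
      rw [hWapp]
      linarith [h1.1, h1.2]
    set R' : ℝ := max R ‖x₁‖ with hR'def
    set K : Set (Euc d × ℝ) := Metric.closedBall 0 R' ×ˢ Set.Icc 0 T with hKdef
    have hKc : IsCompact K := (isCompact_closedBall _ _).prod isCompact_Icc
    have hKne : ((x₁, t₁) : Euc d × ℝ) ∈ K := by
      constructor
      · rw [mem_closedBall_zero_iff]
        exact le_max_right _ _
      · exact ht₁
    have hKsub : K ⊆ Set.univ ×ˢ Set.Ici 0 := by
      rintro ⟨x, t⟩ ⟨_, ht⟩
      exact ⟨trivial, ht.1⟩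
    have hWcont : ContinuousOn W K := by
      rw [hWdef]
      exact (((hv_cont.sub hu_cont).sub
        ((continuous_const.mul continuous_snd).continuousOn)).mono hKsub)
    obtain ⟨⟨x₀, t₀⟩, hp₀K, hp₀max⟩ := hKc.exists_isMaxOn ⟨_, hKne⟩ hWcont
    obtain ⟨M, hMdef⟩ : ∃ M : ℝ, M = W (x₀, t₀) := ⟨_, rfl⟩
    have hMval : M = v x₀ t₀ - u x₀ t₀ - ε * t₀ := by rw [hMdef, hWapp]
    have hcM : c ≤ M := by rw [hcdef, hMdef]; exact hp₀max hKne
    have ht₀mem : t₀ ∈ Set.Icc 0 T := hp₀K.2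
    have hglob : ∀ x : Euc d, ∀ t ∈ Set.Icc 0 T, W (x, t) ≤ M := by
      intro x t ht
      by_cases hx : ‖x‖ ≤ R'
      · rw [hMdef]
        exact hp₀max ⟨by rwa [mem_closedBall_zero_iff], ht⟩
      · push_neg at hx
        exact le_trans (hout x (le_trans (le_max_left _ _) hx.le) t ht).le hcM
    have ht₀pos : 0 < t₀ := by
      rcases ht₀mem.1.lt_or_eq with h | h
      · exact h
      · exfalso
        have hM0 : M = 0 := by
          rw [hMval, ← h, hv0, hu0]
          ring
        linarith
    -- time derivative at the maximum point
    have hud : DifferentiableAt ℝ (u x₀) t₀ :=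
      ((hu_reg.2 x₀).contDiffAt (Ioi_mem_nhds ht₀pos)).differentiableAt one_ne_zero
    have hvd : DifferentiableAt ℝ (v x₀) t₀ :=
      ((hv_reg.2 x₀).contDiffAt (Ioi_mem_nhds ht₀pos)).differentiableAt one_ne_zero
    have hh : HasDerivAt (fun t => v x₀ t - u x₀ t - ε * t)
        (deriv (v x₀) t₀ - deriv (u x₀) t₀ - ε) t₀ := by
      have h3 : HasDerivAt (fun t : ℝ => ε * t) ε t₀ := by
        simpa using (hasDerivAt_id t₀).const_mul ε
      exact (hvd.hasDerivAt.sub hud.hasDerivAt).sub h3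
    have hD0 : 0 ≤ deriv (v x₀) t₀ - deriv (u x₀) t₀ - ε := by
      have hslope := hasDerivAt_iff_tendsto_slope.mp hh
      have hnecl : t₀ ∈ closure (Set.Ioo 0 t₀) := by
        rw [closure_Ioo ht₀pos.ne]
        exact ⟨ht₀pos.le, le_rfl⟩
      have hnb : (𝓝[Set.Ioo 0 t₀] t₀).NeBot := mem_closure_iff_nhdsWithin_neBot.mp hnecl
      have hmono : 𝓝[Set.Ioo 0 t₀] t₀ ≤ 𝓝[≠] t₀ :=
        nhdsWithin_mono _ (fun s hs => ne_of_lt hs.2)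
      refine ge_of_tendsto (hslope.mono_left hmono) ?_
      filter_upwards [self_mem_nhdsWithin] with s hs
      have hsmem : s ∈ Set.Icc 0 T := ⟨hs.1.le, hs.2.le.trans ht₀mem.2⟩
      have h1 := hglob x₀ s hsmem
      rw [hWapp] at h1
      rw [slope_def_field]
      apply div_nonneg_iff.mpr
      right
      constructor
      · show (fun t => v x₀ t - u x₀ t - ε * t) s - (fun t => v x₀ t - u x₀ t - ε * t) t₀ ≤ 0
        simp only
        linarith [hMval]
      · linarith [hs.2]
    -- spatial part
    have hv2 : ContDiff ℝ 2 (fun x => v x t₀) := hv_reg.1 t₀ ht₀pos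
    have hu2 : ContDiff ℝ 2 (fun x => u x t₀) := hu_reg.1 t₀ ht₀pos
    set g : Euc d → ℝ := fun x => v x t₀ - u x t₀ with hgdef
    have hg2 : ContDiff ℝ 2 g := hv2.sub hu2
    have hgmax : ∀ x, g x ≤ g x₀ := by
      intro x
      have h1 := hglob x t₀ ht₀mem
      rw [hWapp] at h1
      show v x t₀ - u x t₀ ≤ v x₀ t₀ - u x₀ t₀
      linarith [hMval]
    set B := fderiv ℝ (fderiv ℝ g) x₀ with hBdef
    have hone2 : (1 : WithTop ℕ∞) ≤ 2 := by exact_mod_cast (by norm_num : (1:ℕ∞) ≤ 2)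
    have hquad : ∀ a : Euc d, B a a ≤ 0 := by
      intro a
      set γ : ℝ → Euc d := fun s => x₀ + s • a with hγdef
      have hγ : ∀ s, HasDerivAt γ a s := by
        intro s
        rw [hγdef]
        simpa using ((hasDerivAt_id s).smul_const a).const_add x₀
      have hγ0 : γ 0 = x₀ := by simp [hγdef]
      set ψ : ℝ → ℝ := fun s => g (γ s) with hψdef
      have hψ2 : ContDiff ℝ 2 ψ :=
        hg2.comp (contDiff_const.add (contDiff_id.smul contDiff_const))
      have hψmax : ∀ s, ψ s ≤ ψ 0 := by
        intro s
        have : ψ 0 = g x₀ := by rw [hψdef]; simp [hγ0]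
        rw [this]
        exact hgmax (γ s)
      have hgd : Differentiable ℝ g := hg2.differentiable two_ne_zero
      have hderivψ : deriv ψ = fun s => fderiv ℝ g (γ s) a := by
        funext s
        exact ((hgd (γ s)).hasFDerivAt.comp_hasDerivAt s (hγ s)).deriv
      have hfd : DifferentiableAt ℝ (fderiv ℝ g) x₀ :=
        (hg2.fderiv_right (m := 1) (le_of_eq (by rfl))).differentiable one_ne_zero x₀
      have h1 : HasDerivAt (fun s => fderiv ℝ g (γ s)) (B a) 0 := by
        have hF : HasFDerivAt (fderiv ℝ g) B (γ 0) := by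
          rw [hγ0]
          exact hfd.hasFDerivAt
        exact hF.comp_hasDerivAt 0 (hγ 0)
      have h2 : HasDerivAt (fun s => fderiv ℝ g (γ s) a) (B a a) 0 := by
        have := h1.clm_apply (hasDerivAt_const 0 a)
        simpa using this
      have hfin := aux_secondDeriv_nonpos ψ hψ2 hψmax
      rwa [hderivψ, h2.deriv] at hfin
    set Hm : Matrix (Fin d) (Fin d) ℝ :=
      hessian (fun y => v y t₀) x₀ - hessian (fun y => u y t₀) x₀ with hHmdef
    have hHmB : ∀ k l, Hm k l =
        B (EuclideanSpace.single k 1) (EuclideanSpace.single l 1) := by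
      have hfv : DifferentiableAt ℝ (fderiv ℝ (fun x => v x t₀)) x₀ :=
        (hv2.fderiv_right (m := 1) (le_of_eq (by rfl))).differentiable one_ne_zero x₀
      have hfu : DifferentiableAt ℝ (fderiv ℝ (fun x => u x t₀)) x₀ :=
        (hu2.fderiv_right (m := 1) (le_of_eq (by rfl))).differentiable one_ne_zero x₀
      have hsub : fderiv ℝ g =
          fun x => fderiv ℝ (fun y => v y t₀) x - fderiv ℝ (fun y => u y t₀) x := by
        funext x
        exact fderiv_sub (hv2.differentiable two_ne_zero x) (hu2.differentiable two_ne_zero x)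
      have hBsplit : B = fderiv ℝ (fderiv ℝ (fun y => v y t₀)) x₀ -
          fderiv ℝ (fderiv ℝ (fun y => u y t₀)) x₀ := by
        rw [hBdef, hsub]
        exact fderiv_sub hfv hfu
      intro k l
      rw [hHmdef]
      simp only [Matrix.sub_apply, hessian, Matrix.of_apply]
      rw [iteratedFDeriv_two_apply, iteratedFDeriv_two_apply, hBsplit]
      simp [Matrix.cons_val_zero, Matrix.cons_val_one, Matrix.head_cons,
        ContinuousLinearMap.sub_apply]
    have htr : Matrix.trace (S * Hm) ≤ 0 := by
      apply aux_trace_nonpos hS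
      intro a
      have hq := hquad a
      rw [aux_bilin_expand' B a a] at hq
      calc ∑ k, ∑ l, a k * a l * Hm k l
          = ∑ k, ∑ l, a k * a l *
            B (EuclideanSpace.single k 1) (EuclideanSpace.single l 1) := by
            exact Finset.sum_congr rfl fun k _ => Finset.sum_congr rfl fun l _ => by
              rw [hHmB]
        _ ≤ 0 := hq
    have h5 := hu_super x₀ t₀ ht₀pos
    have h6 := hv_sub x₀ t₀ ht₀pos
    have h7 : Matrix.trace (S * hessian (fun y => v y t₀) x₀) -
        Matrix.trace (S * hessian (fun y => u y t₀) x₀) = Matrix.trace (S * Hm) := by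
      rw [hHmdef, Matrix.mul_sub, Matrix.trace_sub]
    clear_value Hm
    linarith
  intro x t ht
  by_contra hlt
  push_neg at hlt
  have hc0 : 0 < v x t - u x t := by linarith
  have hkey := key ((v x t - u x t) / (2 * T)) (by positivity) x t ht
  have h2 : (v x t - u x t) / (2*T) * t ≤ (v x t - u x t) / (2*T) * T :=
    mul_le_mul_of_nonneg_left ht.2 (by positivity)
  have h3 : (v x t - u x t) / (2*T) * T = (v x t - u x t)/2 := by
    field_simp
  linarith


end
end

section
/- Time-increment bound for the scheme: for every f ∈ C^2(ℝ^d), every integer n ≥ 1, every x ∈ ℝ^d and every t ≥ 0, |u_n(x, t + 1/n) − u_n(x,t)| ≤ ‖f‖_{C^2} · tr(Σ) / (2n). -/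
open MeasureTheory ProbabilityTheory Filter Topology Set

noncomputable section

section Helpers
open intervalIntegral

lemma taylor_two {E : Type*} [NormedAddCommGroup E] [NormedSpace ℝ E] {f : E → ℝ}
    (hf : ContDiff ℝ 2 f) {M2 : ℝ} (hM2 : ∀ y, ‖iteratedFDeriv ℝ 2 f y‖ ≤ M2)
    (z h : E) : |f (z + h) - f z - fderiv ℝ f z h| ≤ M2 / 2 * ‖h‖ ^ 2 := by
  set c : ℝ → E := fun s => z + s • h with hc
  have hcd : ∀ s : ℝ, HasDerivAt c h s := fun s => by
    have := ((hasDerivAt_id s).smul_const h).const_add z; rw [one_smul] at this; exact this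
  have hccont : Continuous c := by continuity
  have hfd : Differentiable ℝ f := hf.differentiable (by norm_num)
  have hfC1 : ContDiff ℝ 1 (fderiv ℝ f) := hf.fderiv_right (by norm_num)
  have hfd' : Differentiable ℝ (fderiv ℝ f) := hfC1.differentiable one_ne_zero
  set φ : ℝ → ℝ := fun s => f (c s) with hφ
  set ψ : ℝ → ℝ := fun s => fderiv ℝ f (c s) h with hψ
  have hφd : ∀ s : ℝ, HasDerivAt φ (ψ s) s := fun s =>
    (hfd (c s)).hasFDerivAt.comp_hasDerivAt s (hcd s)
  have hψd : ∀ s : ℝ, HasDerivAt ψ (fderiv ℝ (fderiv ℝ f) (c s) h h) s := fun s => by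
    have h1 : HasDerivAt (fun u => fderiv ℝ f (c u)) (fderiv ℝ (fderiv ℝ f) (c s) h) s :=
      (hfd' (c s)).hasFDerivAt.comp_hasDerivAt s (hcd s)
    have h2 : HasDerivAt (fun u => (fderiv ℝ f (c u)) h)
        ((fderiv ℝ (fderiv ℝ f) (c s)) h h + (fderiv ℝ f (c s)) 0) s :=
      h1.clm_apply (hasDerivAt_const s h)
    simpa using h2
  have hψbound : ∀ s : ℝ, ‖fderiv ℝ (fderiv ℝ f) (c s) h h‖ ≤ M2 * ‖h‖ ^ 2 := fun s => by
    have e := iteratedFDeriv_two_apply (𝕜 := ℝ) f (c s) ![h, h]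
    simp only [Matrix.cons_val_zero, Matrix.cons_val_one, Matrix.head_cons] at e
    rw [← e]
    calc ‖iteratedFDeriv ℝ 2 f (c s) ![h, h]‖
        ≤ ‖iteratedFDeriv ℝ 2 f (c s)‖ * ∏ i, ‖![h, h] i‖ :=
          (iteratedFDeriv ℝ 2 f (c s)).le_opNorm _
      _ ≤ M2 * ‖h‖ ^ 2 := by
          rw [Fin.prod_univ_two]
          simp only [Matrix.cons_val_zero, Matrix.cons_val_one, Matrix.head_cons]
          rw [← sq]
          exact mul_le_mul_of_nonneg_right (hM2 _) (by positivity)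
  have hψlip : ∀ s : ℝ, ‖ψ s - ψ 0‖ ≤ M2 * ‖h‖ ^ 2 * ‖s‖ := fun s => by
    have := convex_univ.norm_image_sub_le_of_norm_hasDerivWithin_le
      (f := ψ) (f' := fun u => fderiv ℝ (fderiv ℝ f) (c u) h h)
      (fun u _ => (hψd u).hasDerivWithinAt) (fun u _ => hψbound u) (Set.mem_univ 0)
      (Set.mem_univ s)
    simpa using this
  have hψcont : Continuous ψ := by
    have h1 : Continuous (fderiv ℝ f) := hfC1.continuous
    exact isBoundedBilinearMap_apply.continuous.comp ((h1.comp hccont).prodMk continuous_const)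
  have hint : IntervalIntegrable ψ volume 0 1 := hψcont.intervalIntegrable 0 1
  have key : φ 1 - φ 0 = ∫ s in (0:ℝ)..1, ψ s :=
    (intervalIntegral.integral_eq_sub_of_hasDerivAt (fun s _ => (hφd s)) hint).symm
  have hrepr : f (z + h) - f z - fderiv ℝ f z h = ∫ s in (0:ℝ)..1, (ψ s - ψ 0) := by
    rw [intervalIntegral.integral_sub hint (intervalIntegrable_const),
      intervalIntegral.integral_const]
    have e1 : φ 1 = f (z + h) := by simp [hφ, hc]
    have e0 : φ 0 = f z := by simp [hφ, hc]
    have eψ0 : ψ 0 = fderiv ℝ f z h := by simp [hψ, hc]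
    rw [← key, e1, e0, eψ0]
    norm_num
  rw [hrepr]
  have hbd : ∀ s ∈ Set.Ioc (0:ℝ) 1, ‖ψ s - ψ 0‖ ≤ M2 * ‖h‖ ^ 2 * s := by
    intro s hs
    have := hψlip s
    rwa [Real.norm_eq_abs s, abs_of_pos hs.1] at this
  have hM2nn : 0 ≤ M2 := le_trans (norm_nonneg _) (hM2 z)
  calc |∫ s in (0:ℝ)..1, (ψ s - ψ 0)| ≤ |∫ s in (0:ℝ)..1, M2 * ‖h‖ ^ 2 * s| := by
        rw [← Real.norm_eq_abs]
        apply intervalIntegral.norm_integral_le_abs_of_norm_le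
        · filter_upwards [ae_restrict_mem measurableSet_Ioc] with s hs
          exact hbd s (by simpa [Set.uIoc_of_le (zero_le_one' ℝ)] using hs)
        · exact (continuous_const.mul continuous_id).intervalIntegrable 0 1
    _ = M2 / 2 * ‖h‖ ^ 2 := by
        rw [intervalIntegral.integral_const_mul, integral_id]
        rw [abs_of_nonneg (by positivity)]
        ring



lemma euc_clm_apply {d : ℕ} (L : Euc d →L[ℝ] ℝ) (v : Euc d) :
    L v = ∑ i, L (EuclideanSpace.single i 1) * v i := by
  have hv : v = ∑ i, v i • EuclideanSpace.single i 1 := by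
    have := (EuclideanSpace.basisFun (Fin d) ℝ).sum_repr v
    simp only [EuclideanSpace.basisFun_apply, EuclideanSpace.basisFun_repr] at this
    exact this.symm
  conv_lhs => rw [hv]
  rw [map_sum]
  refine Finset.sum_congr rfl fun i _ => ?_
  rw [L.map_smul, smul_eq_mul, mul_comm]

lemma euc_norm_sq {d : ℕ} (v : Euc d) : ‖v‖ ^ 2 = ∑ i, v i ^ 2 := by
  rw [EuclideanSpace.norm_eq, Real.sq_sqrt]
  · exact Finset.sum_congr rfl fun i _ => by simp [Real.norm_eq_abs, sq_abs]
  · positivity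

lemma integrable_of_bdd {Ω : Type} [MeasurableSpace Ω] {μ : Measure Ω} [IsFiniteMeasure μ]
    {g : Ω → ℝ} (hm : AEStronglyMeasurable g μ) {M : ℝ} (hb : ∀ ω, |g ω| ≤ M) :
    Integrable g μ :=
  Integrable.mono' (integrable_const M) hm (Filter.Eventually.of_forall fun ω => by
    simpa [Real.norm_eq_abs] using hb ω)

lemma fderiv_norm_le_of_iter {E : Type*} [NormedAddCommGroup E] [NormedSpace ℝ E] {f : E → ℝ}
    {M1 : ℝ} (hM1 : ∀ y, ‖iteratedFDeriv ℝ 1 f y‖ ≤ M1) (y : E) : ‖fderiv ℝ f y‖ ≤ M1 := by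
  refine ContinuousLinearMap.opNorm_le_bound _ (le_trans (norm_nonneg _) (hM1 y)) fun v => ?_
  have e : fderiv ℝ f y v = iteratedFDeriv ℝ 1 f y ![v] := by
    rw [iteratedFDeriv_one_apply]
    simp
  rw [e]
  calc ‖iteratedFDeriv ℝ 1 f y ![v]‖ ≤ ‖iteratedFDeriv ℝ 1 f y‖ * ∏ i, ‖![v] i‖ :=
        (iteratedFDeriv ℝ 1 f y).le_opNorm _
    _ ≤ M1 * ‖v‖ := by
        rw [Fin.prod_univ_one]
        exact mul_le_mul_of_nonneg_right (hM1 y) (by simp [norm_nonneg])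

end Helpers

set_option maxHeartbeats 1000000 in
/-- **Time-increment bound for the scheme**: for every `f ∈ C²(ℝ^d)`, `n ≥ 1`, `x ∈ ℝ^d` and
`t ≥ 0`, `|u_n(x, t + 1/n) − u_n(x,t)| ≤ ‖f‖_{C²} tr(Σ) / (2n)`. -/
theorem scheme_time_increment
    {d : ℕ} (hd : 1 ≤ d) {Ω : Type} [MeasurableSpace Ω] (μ : Measure Ω)
    [IsProbabilityMeasure μ] (X : ℕ → Ω → Euc d) (S : Matrix (Fin d) (Fin d) ℝ)
    (hX : IsIIDCentered μ X S)
    (f : Euc d → ℝ) (hf : MemCk 2 f)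
    (n : ℕ) (hn : 1 ≤ n) (x : Euc d) (t : ℝ) (ht : 0 ≤ t) :
    |schemeU μ X f n x (t + 1 / n) - schemeU μ X f n x t| ≤
      ckNorm 2 f * Matrix.trace S / (2 * n) := by
  classical
  obtain ⟨hfC2, hbd⟩ := hf
  obtain ⟨B1, hB1⟩ := hbd 1 (by norm_num)
  obtain ⟨B0, hB0⟩ := hbd 0 (by norm_num)
  -- the C² norm dominates the sup of the second derivative
  have hM2 : ∀ y, ‖iteratedFDeriv ℝ 2 f y‖ ≤ ckNorm 2 f := by
    intro y
    obtain ⟨B2, hB2⟩ := hbd 2 le_rfl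
    have h2 : ‖iteratedFDeriv ℝ 2 f y‖ ≤ ⨆ x, ‖iteratedFDeriv ℝ 2 f x‖ :=
      le_ciSup ⟨B2, by rintro r ⟨w, rfl⟩; exact hB2 w⟩ y
    have h0 : 0 ≤ ⨆ x, ‖iteratedFDeriv ℝ 0 f x‖ := Real.iSup_nonneg fun w => norm_nonneg _
    have h1 : 0 ≤ ⨆ x, ‖iteratedFDeriv ℝ 1 f x‖ := Real.iSup_nonneg fun w => norm_nonneg _
    simp only [ckNorm, Finset.sum_range_succ, Finset.sum_range_zero]
    linarith
  have hfbd : ∀ y, |f y| ≤ B0 := fun y => by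
    rw [← Real.norm_eq_abs, ← norm_iteratedFDeriv_zero (𝕜 := ℝ) (f := f) (x := y)]; exact hB0 y
  have hn0 : (0:ℝ) < n := by exact_mod_cast Nat.lt_of_lt_of_le Nat.zero_lt_one hn
  set m := ⌊(n : ℝ) * t⌋₊ with hm
  have hfloor : ⌊(n : ℝ) * (t + 1 / n)⌋₊ = m + 1 := by
    have he : (n : ℝ) * (t + 1 / n) = n * t + 1 := by field_simp
    rw [he, hm, Nat.floor_add_one (by positivity)]
  set c : ℝ := (Real.sqrt n)⁻¹ with hcdef
  have hc2 : c ^ 2 = 1 / n := by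
    rw [hcdef, inv_pow, Real.sq_sqrt hn0.le, one_div]
  -- measurability
  have hXm : ∀ k, Measurable (X k) := hX.meas
  have hpSm : Measurable (pSum X m) := by
    unfold pSum; exact Finset.measurable_sum _ fun i _ => hXm i
  set Z : Ω → Euc d := fun ω => x + c • pSum X m ω with hZ
  set W : Ω → Euc d := fun ω => c • X m ω with hW
  have hZmeas : Measurable Z := (hpSm.const_smul c).const_add x
  have hWmeas : Measurable W := (hXm m).const_smul c
  -- integrability of X m
  have hmapm : μ.map (X m) = μ.map (X 0) := hX.ident m
  have hXm2 : MemLp (X m) 2 μ := by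
    have h0 : MemLp (id : Euc d → Euc d) 2 (μ.map (X 0)) :=
      (memLp_map_measure_iff aestronglyMeasurable_id (hXm 0).aemeasurable).mpr hX.sqInt
    have h1 : MemLp (id : Euc d → Euc d) 2 (μ.map (X m)) := by rw [hmapm]; exact h0
    exact (memLp_map_measure_iff aestronglyMeasurable_id (hXm m).aemeasurable).mp h1
  have hXmInt : Integrable (X m) μ := hXm2.integrable one_le_two
  have hXmNorm2 : Integrable (fun ω => ‖X m ω‖ ^ 2) μ := hXm2.norm.integrable_sq
  -- decomposition of the increment
  have hptsum : ∀ ω, x + c • pSum X (m + 1) ω = Z ω + W ω := fun ω => by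
    simp only [hZ, hW, pSum, Finset.sum_range_succ, smul_add, add_assoc]
  have hschemeL : schemeU μ X f n x (t + 1 / n) = ∫ ω, f (Z ω + W ω) ∂μ := by
    simp only [schemeU, hfloor, ← hcdef, hptsum]
  have hschemeR : schemeU μ X f n x t = ∫ ω, f (Z ω) ∂μ := by
    simp only [schemeU, ← hm, ← hcdef, hZ]
  -- Taylor expansion
  set G : Ω → ℝ := fun ω => fderiv ℝ f (Z ω) (W ω) with hG
  set R : Ω → ℝ := fun ω => f (Z ω + W ω) - f (Z ω) - G ω with hR
  have hTaylor : ∀ ω, |R ω| ≤ ckNorm 2 f / 2 * ‖W ω‖ ^ 2 := fun ω =>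
    taylor_two hfC2 hM2 (Z ω) (W ω)
  -- integrability of the pieces
  have hfderivC : Continuous (fderiv ℝ f) := (hfC2.fderiv_right (m := 1) (by norm_num)).continuous
  have hfcont : Continuous f := hfC2.continuous
  have hfZW : Integrable (fun ω => f (Z ω + W ω)) μ :=
    integrable_of_bdd ((hfcont.measurable.comp (hZmeas.add hWmeas)).aestronglyMeasurable)
      fun ω => hfbd _
  have hfZ : Integrable (fun ω => f (Z ω)) μ :=
    integrable_of_bdd ((hfcont.measurable.comp hZmeas).aestronglyMeasurable) fun ω => hfbd _
  have hGmeas : Measurable G := by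
    have h1 : Measurable fun ω => (fderiv ℝ f (Z ω), W ω) :=
      (hfderivC.measurable.comp hZmeas).prodMk hWmeas
    exact isBoundedBilinearMap_apply.continuous.measurable.comp h1
  have hGbd : ∀ ω, |G ω| ≤ B1 * |c| * ‖X m ω‖ := fun ω => by
    have h1 : |G ω| ≤ ‖fderiv ℝ f (Z ω)‖ * ‖W ω‖ := by
      rw [← Real.norm_eq_abs]; exact (fderiv ℝ f (Z ω)).le_opNorm _
    have h2 : ‖W ω‖ = |c| * ‖X m ω‖ := by rw [hW, norm_smul, Real.norm_eq_abs]
    calc |G ω| ≤ ‖fderiv ℝ f (Z ω)‖ * ‖W ω‖ := h1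
      _ ≤ B1 * ‖W ω‖ :=
          mul_le_mul_of_nonneg_right (fderiv_norm_le_of_iter hB1 _) (norm_nonneg _)
      _ = B1 * |c| * ‖X m ω‖ := by rw [h2]; ring
  have hGint : Integrable G μ := by
    refine Integrable.mono' (hXmInt.norm.const_mul (B1 * |c|)) hGmeas.aestronglyMeasurable
      (Filter.Eventually.of_forall fun ω => ?_)
    simpa [Real.norm_eq_abs] using hGbd ω
  have hRint : Integrable R μ := (hfZW.sub hfZ).sub hGint
  have hWsqeq : (fun ω => ‖W ω‖ ^ 2) = fun ω => c ^ 2 * ‖X m ω‖ ^ 2 := funext fun ω => by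
    rw [hW, norm_smul, mul_pow, Real.norm_eq_abs, sq_abs]
  have hWsq : Integrable (fun ω => ‖W ω‖ ^ 2) μ := by
    rw [hWsqeq]; exact hXmNorm2.const_mul _
  -- the first order term has zero expectation
  have hindep : IndepFun (pSum X m) (X m) μ := by
    have h0 := hX.indep.indepFun_sum_range_succ hXm m
    have hsum_eq : (∑ j ∈ Finset.range m, X j) = pSum X m := by
      funext ω; simp [pSum, Finset.sum_apply]
    rwa [hsum_eq] at h0
  have hEXmi : ∀ i, ∫ ω, X m ω i ∂μ = 0 := by
    intro i
    have hprojc : Continuous fun y : Euc d => y i :=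
      (EuclideanSpace.proj (𝕜 := ℝ) i).continuous
    have h1 : ∫ ω, X m ω i ∂μ = ∫ y, y i ∂(μ.map (X m)) :=
      (integral_map (hXm m).aemeasurable hprojc.aestronglyMeasurable).symm
    have h2 : ∫ y, y i ∂(μ.map (X 0)) = ∫ ω, X 0 ω i ∂μ :=
      integral_map (hXm 0).aemeasurable hprojc.aestronglyMeasurable
    rw [h1, hmapm, h2]
    have h3 := (EuclideanSpace.proj (𝕜 := ℝ) i).integral_comp_comm
      (hX.sqInt.integrable one_le_two)
    have h4 : ∀ ω, (EuclideanSpace.proj (𝕜 := ℝ) i) (X 0 ω) = X 0 ω i := fun ω => rfl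
    simp only [h4] at h3
    rw [h3, hX.centered]
    rfl
  have hGzero : ∫ ω, G ω ∂μ = 0 := by
    set φ : Fin d → Euc d → ℝ :=
      fun i y => fderiv ℝ f (x + c • y) (EuclideanSpace.single i 1) with hφ
    have hφcont : ∀ i, Continuous (φ i) := fun i => by
      have h1 : Continuous fun y : Euc d => fderiv ℝ f (x + c • y) :=
        hfderivC.comp (continuous_const.add (continuous_id.const_smul c))
      exact isBoundedBilinearMap_apply.continuous.comp (h1.prodMk continuous_const)
    have hφbd : ∀ i y, |φ i y| ≤ B1 := fun i y => by
      rw [← Real.norm_eq_abs]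
      calc ‖φ i y‖ ≤ ‖fderiv ℝ f (x + c • y)‖ * ‖EuclideanSpace.single (𝕜 := ℝ) i (1:ℝ)‖ :=
            (fderiv ℝ f (x + c • y)).le_opNorm _
        _ ≤ B1 := by
            rw [EuclideanSpace.norm_single]
            simpa using fderiv_norm_le_of_iter hB1 (x + c • y)
    have hGrepr : ∀ ω, G ω = ∑ i, c * (φ i (pSum X m ω) * X m ω i) := fun ω => by
      show (fderiv ℝ f (Z ω)) (W ω) = _
      rw [euc_clm_apply]
      refine Finset.sum_congr rfl fun i _ => ?_
      have hWi : W ω i = c * X m ω i := rfl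
      rw [hWi, hφ]
      simp only [hZ]
      ring
    have hsummInt : ∀ i : Fin d, Integrable (fun ω => c * (φ i (pSum X m ω) * X m ω i)) μ := by
      intro i
      have hXi : Integrable (fun ω => X m ω i) μ :=
        (EuclideanSpace.proj (𝕜 := ℝ) i).integrable_comp hXmInt
      have hmul : Integrable (fun ω => φ i (pSum X m ω) * X m ω i) μ :=
        hXi.bdd_mul (c := B1) ((hφcont i).measurable.comp hpSm).aestronglyMeasurable
          (Filter.Eventually.of_forall fun ω => by simpa [Real.norm_eq_abs] using hφbd i (pSum X m ω))
      exact hmul.const_mul c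
    have hzero_i : ∀ i : Fin d, ∫ ω, φ i (pSum X m ω) * X m ω i ∂μ = 0 := by
      intro i
      have hind_i : IndepFun (fun ω => φ i (pSum X m ω)) (fun ω => X m ω i) μ :=
        hindep.comp (hφcont i).measurable (EuclideanSpace.proj (𝕜 := ℝ) i).measurable
      have hXi : Integrable (fun ω => X m ω i) μ :=
        (EuclideanSpace.proj (𝕜 := ℝ) i).integrable_comp hXmInt
      have hφint : Integrable (fun ω => φ i (pSum X m ω)) μ :=
        integrable_of_bdd ((hφcont i).measurable.comp hpSm).aestronglyMeasurable
          fun ω => hφbd i _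
      have hprod := IndepFun.integral_mul_eq_mul_integral hind_i hφint.aestronglyMeasurable hXi.aestronglyMeasurable
      have he : ((fun ω => φ i (pSum X m ω)) * fun ω => X m ω i) =
          fun ω => φ i (pSum X m ω) * X m ω i := rfl
      rw [he] at hprod
      rw [hprod, hEXmi i, mul_zero]
    calc ∫ ω, G ω ∂μ = ∫ ω, ∑ i, c * (φ i (pSum X m ω) * X m ω i) ∂μ :=
          integral_congr_ae (Filter.Eventually.of_forall fun ω => hGrepr ω)
      _ = ∑ i, ∫ ω, c * (φ i (pSum X m ω) * X m ω i) ∂μ :=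
          integral_finset_sum _ fun i _ => hsummInt i
      _ = 0 := by
          refine Finset.sum_eq_zero fun i _ => ?_
          rw [integral_const_mul, hzero_i i, mul_zero]
  -- trace identity
  have htr : ∫ ω, ‖X m ω‖ ^ 2 ∂μ = Matrix.trace S := by
    have hnormc : Continuous fun y : Euc d => ‖y‖ ^ 2 := by continuity
    have h1 : ∫ ω, ‖X m ω‖ ^ 2 ∂μ = ∫ y, ‖y‖ ^ 2 ∂(μ.map (X m)) :=
      (integral_map (hXm m).aemeasurable hnormc.aestronglyMeasurable).symm
    have h2 : ∫ y, ‖y‖ ^ 2 ∂(μ.map (X 0)) = ∫ ω, ‖X 0 ω‖ ^ 2 ∂μ :=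
      integral_map (hXm 0).aemeasurable hnormc.aestronglyMeasurable
    rw [h1, hmapm, h2]
    have hXi2 : ∀ i : Fin d, Integrable (fun ω => X 0 ω i ^ 2) μ := fun i =>
      ((EuclideanSpace.proj (𝕜 := ℝ) i).comp_memLp' hX.sqInt).integrable_sq
    have h3 : ∫ ω, ‖X 0 ω‖ ^ 2 ∂μ = ∑ i, ∫ ω, X 0 ω i ^ 2 ∂μ := by
      rw [← integral_finset_sum _ fun i _ => hXi2 i]
      exact integral_congr_ae (Filter.Eventually.of_forall fun ω => euc_norm_sq (X 0 ω))
    rw [h3, Matrix.trace, ← hX.covEq]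
    refine Finset.sum_congr rfl fun i _ => ?_
    simp only [Matrix.diag, covMatrix, Matrix.of_apply]
    exact integral_congr_ae (Filter.Eventually.of_forall fun ω => by simp [sq])
  -- put everything together
  have hsplit : schemeU μ X f n x (t + 1 / n) - schemeU μ X f n x t = ∫ ω, R ω ∂μ := by
    rw [hschemeL, hschemeR]
    have h1 : ∫ ω, R ω ∂μ =
        (∫ ω, f (Z ω + W ω) ∂μ - ∫ ω, f (Z ω) ∂μ) - ∫ ω, G ω ∂μ := by
      have hab : Integrable (fun ω => f (Z ω + W ω) - f (Z ω)) μ := hfZW.sub hfZ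
      have h0 : ∫ ω, R ω ∂μ = ∫ ω, (f (Z ω + W ω) - f (Z ω)) - G ω ∂μ := rfl
      rw [h0, integral_sub hab hGint, integral_sub hfZW hfZ]
    rw [h1, hGzero, sub_zero]
  rw [hsplit]
  have hcknn : 0 ≤ ckNorm 2 f := le_trans (norm_nonneg _) (hM2 0)
  calc |∫ ω, R ω ∂μ| ≤ ∫ ω, |R ω| ∂μ := by
        rw [← Real.norm_eq_abs]
        exact (norm_integral_le_integral_norm R).trans (le_of_eq (by simp [Real.norm_eq_abs]))
    _ ≤ ∫ ω, ckNorm 2 f / 2 * ‖W ω‖ ^ 2 ∂μ :=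
        integral_mono hRint.abs (hWsq.const_mul _) fun ω => hTaylor ω
    _ = ckNorm 2 f / 2 * (c ^ 2 * ∫ ω, ‖X m ω‖ ^ 2 ∂μ) := by
        have e : (fun ω => ckNorm 2 f / 2 * ‖W ω‖ ^ 2) =
            fun ω => (ckNorm 2 f / 2 * c ^ 2) * ‖X m ω‖ ^ 2 := funext fun ω => by
          rw [congrFun hWsqeq ω]; ring
        rw [e, integral_const_mul]
        ring
    _ = ckNorm 2 f * Matrix.trace S / (2 * n) := by
        rw [htr, hc2]
        ring


end
end

section
/- Time-increment bound for the Laplacian of the scheme: for every f ∈ C^4(ℝ^d), every integer n ≥ 1, every x ∈ ℝ^d and every t ≥ 0, |tr(D²u_n(x, t + 1/n)) − tr(D²u_n(x,t))| ≤ d · ‖f‖_{C^4} · tr(Σ) / (2n), where D²u_n denotes the Hessian of u_n in the spatial variable. -/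
open MeasureTheory ProbabilityTheory Filter Topology Set

set_option synthInstance.maxHeartbeats 1000000
set_option maxHeartbeats 1000000
set_option maxSynthPendingDepth 3
noncomputable section

section AuxLemmas
set_option linter.unusedSectionVars false

lemma DUI {d : ℕ} {E : Type*} [NormedAddCommGroup E] [NormedSpace ℝ E] [CompleteSpace E]
    {Ω : Type} [MeasurableSpace Ω] (μ : Measure Ω) [IsProbabilityMeasure μ]
    (Y : Ω → Euc d) (hY : Measurable Y) (f : Euc d → E) (hf : ContDiff ℝ 1 f)
    (B0 B1 : ℝ) (hB0 : ∀ z, ‖f z‖ ≤ B0) (hB1 : ∀ z, ‖fderiv ℝ f z‖ ≤ B1) (x : Euc d) :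
    HasFDerivAt (fun x => ∫ ω, f (x + Y ω) ∂μ) (∫ ω, fderiv ℝ f (x + Y ω) ∂μ) x := by
  have hfc : Continuous f := hf.continuous
  have hf' : Continuous (fderiv ℝ f) := hf.continuous_fderiv one_ne_zero
  refine hasFDerivAt_integral_of_dominated_of_fderiv_le (μ := μ)
    (F := fun x ω => f (x + Y ω)) (F' := fun x ω => fderiv ℝ f (x + Y ω)) (x₀ := x)
    (bound := fun _ => B1) (Metric.ball_mem_nhds x one_pos) ?_ ?_ ?_ ?_ ?_ ?_
  · filter_upwards with x' using (hfc.stronglyMeasurable.comp_measurable (hY.const_add x')).aestronglyMeasurable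
  · exact (integrable_const B0).mono' (hfc.stronglyMeasurable.comp_measurable (hY.const_add x)).aestronglyMeasurable
      (by filter_upwards with ω; exact hB0 (x + Y ω))
  · exact (hf'.stronglyMeasurable.comp_measurable (hY.const_add x)).aestronglyMeasurable
  · filter_upwards with ω x' _; exact hB1 _
  · exact integrable_const B1
  · filter_upwards with ω x' _
    have h1 : HasFDerivAt (fun x : Euc d => x + Y ω) (ContinuousLinearMap.id ℝ (Euc d)) x' :=
      (hasFDerivAt_id x').add_const (Y ω)
    have h2 : HasFDerivAt f (fderiv ℝ f (x' + Y ω)) (x' + Y ω) :=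
      (hf.differentiable one_ne_zero).differentiableAt.hasFDerivAt
    simpa [Function.comp_def] using h2.comp x' h1

lemma hess_trace_integral {d : ℕ} {Ω : Type} [MeasurableSpace Ω] (μ : Measure Ω)
    [IsProbabilityMeasure μ] (Y : Ω → Euc d) (hY : Measurable Y) (f : Euc d → ℝ)
    (hf : ContDiff ℝ 2 f) (B0 B1 B2 : ℝ) (hB0 : ∀ z, ‖f z‖ ≤ B0)
    (hB1 : ∀ z, ‖fderiv ℝ f z‖ ≤ B1) (hB2 : ∀ z, ‖fderiv ℝ (fderiv ℝ f) z‖ ≤ B2)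
    (x : Euc d) (i j : Fin d) :
    iteratedFDeriv ℝ 2 (fun x => ∫ ω, f (x + Y ω) ∂μ) x
        ![EuclideanSpace.single i 1, EuclideanSpace.single j 1]
      = ∫ ω, fderiv ℝ (fderiv ℝ f) (x + Y ω) (EuclideanSpace.single i 1)
          (EuclideanSpace.single j 1) ∂μ := by
  have hf1 : ContDiff ℝ 1 f := hf.of_le (by norm_num)
  have hdf : ContDiff ℝ 1 (fderiv ℝ f) := hf.fderiv_right (m := 1) (by norm_num)
  have h1 : ∀ x', HasFDerivAt (fun x => ∫ ω, f (x + Y ω) ∂μ)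
      (∫ ω, fderiv ℝ f (x' + Y ω) ∂μ) x' :=
    fun x' => DUI μ Y hY f hf1 B0 B1 hB0 hB1 x'
  have hG : fderiv ℝ (fun x => ∫ ω, f (x + Y ω) ∂μ)
      = fun x => ∫ ω, fderiv ℝ f (x + Y ω) ∂μ := funext fun x' => (h1 x').fderiv
  have h2 : HasFDerivAt (fun x => ∫ ω, fderiv ℝ f (x + Y ω) ∂μ)
      (∫ ω, fderiv ℝ (fderiv ℝ f) (x + Y ω) ∂μ) x :=
    DUI μ Y hY (fderiv ℝ f) hdf B1 B2 hB1 hB2 x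
  rw [iteratedFDeriv_two_apply]
  have : fderiv ℝ (fderiv ℝ fun x => ∫ ω, f (x + Y ω) ∂μ) x
      = ∫ ω, fderiv ℝ (fderiv ℝ f) (x + Y ω) ∂μ := by
    rw [hG]; exact h2.fderiv
  rw [this]
  have hint : Integrable (fun ω => fderiv ℝ (fderiv ℝ f) (x + Y ω)) μ :=
    (integrable_const B2).mono'
      ((hdf.continuous_fderiv one_ne_zero).stronglyMeasurable.comp_measurable (hY.const_add x)).aestronglyMeasurable
      (by filter_upwards with ω; exact hB2 _)
  rw [ContinuousLinearMap.integral_apply hint]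
  rw [ContinuousLinearMap.integral_apply]
  · simp
  · exact hint.apply_continuousLinearMap (EuclideanSpace.single i 1)

lemma taylor2 {d : ℕ} (g : Euc d → ℝ) (hg : ContDiff ℝ 2 g) (M : ℝ)
    (hM : ∀ z, ‖fderiv ℝ (fderiv ℝ g) z‖ ≤ M) (y h : Euc d) :
    |g (y + h) - g y - fderiv ℝ g y h| ≤ M / 2 * ‖h‖ ^ 2 := by
  have hg1 : Differentiable ℝ g := hg.differentiable (by norm_num)
  have hdg : ContDiff ℝ 1 (fderiv ℝ g) := hg.fderiv_right (m := 1) (by norm_num)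
  set φ : ℝ → ℝ := fun s => g (y + s • h) with hφ
  set ψ : ℝ → ℝ := fun s => fderiv ℝ g (y + s • h) h with hψ
  have hline : ∀ s : ℝ, HasDerivAt (fun s : ℝ => y + s • h) h s := fun s => by
    simpa using ((hasDerivAt_id s).smul_const h).const_add y
  have hφ' : ∀ s : ℝ, HasDerivAt φ (ψ s) s := fun s =>
    (hg1 (y + s • h)).hasFDerivAt.comp_hasDerivAt s (hline s)
  have hψ' : ∀ s : ℝ, HasDerivAt ψ (fderiv ℝ (fderiv ℝ g) (y + s • h) h h) s := fun s => by
    have hA : HasFDerivAt (fun z => fderiv ℝ g z h)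
        ((ContinuousLinearMap.apply ℝ ℝ h).comp (fderiv ℝ (fderiv ℝ g) (y + s • h)))
        (y + s • h) :=
      (ContinuousLinearMap.apply ℝ ℝ h).hasFDerivAt.comp _
        ((hdg.differentiable one_ne_zero) (y + s • h)).hasFDerivAt
    simpa [Function.comp_def] using hA.comp_hasDerivAt s (hline s)
  have hψbd : ∀ s : ℝ, ‖fderiv ℝ (fderiv ℝ g) (y + s • h) h h‖ ≤ M * ‖h‖ ^ 2 := by
    intro s
    calc ‖fderiv ℝ (fderiv ℝ g) (y + s • h) h h‖
        ≤ ‖fderiv ℝ (fderiv ℝ g) (y + s • h) h‖ * ‖h‖ :=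
          (fderiv ℝ (fderiv ℝ g) (y + s • h) h).le_opNorm h
      _ ≤ (‖fderiv ℝ (fderiv ℝ g) (y + s • h)‖ * ‖h‖) * ‖h‖ := by
          gcongr; exact (fderiv ℝ (fderiv ℝ g) (y + s • h)).le_opNorm h
      _ ≤ (M * ‖h‖) * ‖h‖ := by
          have := hM (y + s • h); gcongr
      _ = M * ‖h‖ ^ 2 := by ring
  have hψlip : ∀ s : ℝ, |ψ s - ψ 0| ≤ (M * ‖h‖ ^ 2) * |s| := by
    intro s
    have := Convex.norm_image_sub_le_of_norm_hasDerivWithin_le (s := (univ : Set ℝ))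
      (f := ψ) (f' := fun s => fderiv ℝ (fderiv ℝ g) (y + s • h) h h)
      (fun u _ => (hψ' u).hasDerivWithinAt) (fun u _ => hψbd u) convex_univ
      (mem_univ 0) (mem_univ s)
    simpa [Real.norm_eq_abs] using this
  have hψc : Continuous ψ := by
    have : Continuous (fderiv ℝ g) := hg.continuous_fderiv (by norm_num)
    exact (ContinuousLinearMap.apply ℝ ℝ h).continuous.comp
      (this.comp (continuous_const.add (continuous_id.smul continuous_const)))
  have hftc : φ 1 - φ 0 = ∫ s in (0:ℝ)..1, ψ s :=
    (intervalIntegral.integral_eq_sub_of_hasDerivAt (fun s _ => hφ' s)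
      (hψc.intervalIntegrable 0 1)).symm
  have key : g (y + h) - g y - fderiv ℝ g y h = ∫ s in (0:ℝ)..1, (ψ s - ψ 0) := by
    rw [intervalIntegral.integral_sub (hψc.intervalIntegrable 0 1)
      (intervalIntegrable_const)]
    simp only [intervalIntegral.integral_const, smul_eq_mul, sub_zero, mul_one]
    rw [← hftc]
    simp [hφ, hψ]
  rw [key]
  have hb : |∫ s in (0:ℝ)..1, (ψ s - ψ 0)| ≤ ∫ s in (0:ℝ)..1, (M * ‖h‖ ^ 2) * s := by
    have hM0 : 0 ≤ M := le_trans (norm_nonneg _) (hM 0)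
    rw [← Real.norm_eq_abs]
    have habs : |∫ s in (0:ℝ)..1, (M * ‖h‖ ^ 2) * s| = ∫ s in (0:ℝ)..1, (M * ‖h‖ ^ 2) * s := by
      rw [abs_of_nonneg]
      apply intervalIntegral.integral_nonneg (by norm_num : (0:ℝ) ≤ 1)
      intro u hu
      have : (0:ℝ) ≤ u := hu.1
      positivity
    apply intervalIntegral.norm_integral_le_of_norm_le (by norm_num)
    · filter_upwards with s hs
      have := hψlip s
      rw [abs_of_pos hs.1] at this
      simpa [Real.norm_eq_abs] using this
    · exact (continuous_const.mul continuous_id).intervalIntegrable 0 1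
  calc |∫ s in (0:ℝ)..1, (ψ s - ψ 0)| ≤ ∫ s in (0:ℝ)..1, (M * ‖h‖ ^ 2) * s := hb
    _ = M / 2 * ‖h‖ ^ 2 := by
        rw [intervalIntegral.integral_const_mul, integral_id]; ring

lemma qfacts {d : ℕ} (f : Euc d → ℝ) (hf : ContDiff ℝ 4 f) (M2 M3 M4 : ℝ)
    (hM2 : ∀ z, ‖iteratedFDeriv ℝ 2 f z‖ ≤ M2)
    (hM3 : ∀ z, ‖iteratedFDeriv ℝ 3 f z‖ ≤ M3)
    (hM4 : ∀ z, ‖iteratedFDeriv ℝ 4 f z‖ ≤ M4) (i : Fin d) :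
    ContDiff ℝ 2 (fun z => fderiv ℝ (fderiv ℝ f) z (EuclideanSpace.single i 1)
        (EuclideanSpace.single i 1)) ∧
    (∀ z, |(fun z => fderiv ℝ (fderiv ℝ f) z (EuclideanSpace.single i 1)
        (EuclideanSpace.single i 1)) z| ≤ M2) ∧
    (∀ z, ‖fderiv ℝ (fun z => fderiv ℝ (fderiv ℝ f) z (EuclideanSpace.single i 1)
        (EuclideanSpace.single i 1)) z‖ ≤ M3) ∧
    ∀ z, ‖fderiv ℝ (fderiv ℝ (fun z => fderiv ℝ (fderiv ℝ f) z (EuclideanSpace.single i 1)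
        (EuclideanSpace.single i 1))) z‖ ≤ M4 := by
  set e : Euc d := EuclideanSpace.single i 1 with he
  have hne : ‖e‖ ≤ 1 := by
    rw [he, EuclideanSpace.norm_single]; norm_num
  set L : (Euc d →L[ℝ] Euc d →L[ℝ] ℝ) →L[ℝ] ℝ :=
    (ContinuousLinearMap.apply ℝ ℝ e).comp (ContinuousLinearMap.apply ℝ (Euc d →L[ℝ] ℝ) e)
    with hL
  have hLnorm : ∀ T : Euc d →L[ℝ] Euc d →L[ℝ] ℝ, ‖L T‖ ≤ ‖T‖ := by
    intro T
    have h1 : ‖T e e‖ ≤ ‖T e‖ * ‖e‖ := (T e).le_opNorm e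
    have h2 : ‖T e‖ ≤ ‖T‖ * ‖e‖ := T.le_opNorm e
    calc ‖L T‖ = ‖T e e‖ := rfl
      _ ≤ ‖T e‖ * ‖e‖ := h1
      _ ≤ (‖T‖ * ‖e‖) * ‖e‖ := by gcongr
      _ ≤ (‖T‖ * 1) * 1 := by gcongr
      _ = ‖T‖ := by ring
  set g : Euc d → (Euc d →L[ℝ] Euc d →L[ℝ] ℝ) := fderiv ℝ (fderiv ℝ f) with hg
  have hg2 : ContDiff ℝ 2 g := by
    have h3 : ContDiff ℝ 3 (fderiv ℝ f) := hf.fderiv_right (m := 3) (by norm_num)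
    exact h3.fderiv_right (m := 2) (by norm_num)
  have hq : (fun z => fderiv ℝ (fderiv ℝ f) z e e) = fun z => L (g z) := rfl
  have hgd : Differentiable ℝ g := hg2.differentiable (by norm_num)
  have hq1 : ∀ z', HasFDerivAt (fun z => L (g z)) (L.comp (fderiv ℝ g z')) z' :=
    fun z' => by simpa [Function.comp_def] using L.hasFDerivAt.comp z' (hgd z').hasFDerivAt
  have hfq : fderiv ℝ (fun z => fderiv ℝ (fderiv ℝ f) z e e)
      = fun z' => L.comp (fderiv ℝ g z') := by
    rw [hq]; exact funext fun z' => (hq1 z').fderiv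
  have hnormg : ∀ z, ‖g z‖ = ‖iteratedFDeriv ℝ 2 f z‖ := by
    intro z
    rw [hg, ← norm_iteratedFDeriv_zero (𝕜 := ℝ) (f := fderiv ℝ (fderiv ℝ f)) (x := z),
      norm_iteratedFDeriv_fderiv, norm_iteratedFDeriv_fderiv]
  have hnormg1 : ∀ z, ‖fderiv ℝ g z‖ = ‖iteratedFDeriv ℝ 3 f z‖ := by
    intro z
    rw [hg, ← norm_iteratedFDeriv_zero (𝕜 := ℝ) (f := fderiv ℝ (fderiv ℝ (fderiv ℝ f))) (x := z),
      norm_iteratedFDeriv_fderiv, norm_iteratedFDeriv_fderiv, norm_iteratedFDeriv_fderiv]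
  refine ⟨?_, ?_, ?_, ?_⟩
  · rw [hq]; exact L.contDiff.comp hg2
  · intro z
    calc |fderiv ℝ (fderiv ℝ f) z e e| = ‖L (g z)‖ := rfl
      _ ≤ ‖g z‖ := hLnorm _
      _ = ‖iteratedFDeriv ℝ 2 f z‖ := hnormg z
      _ ≤ M2 := hM2 z
  · intro z
    rw [hfq]
    refine ContinuousLinearMap.opNorm_le_bound _ (le_trans (norm_nonneg _) (hM3 z)) ?_
    intro v
    calc ‖(L.comp (fderiv ℝ g z)) v‖ = ‖L (fderiv ℝ g z v)‖ := rfl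
      _ ≤ ‖fderiv ℝ g z v‖ := hLnorm _
      _ ≤ ‖fderiv ℝ g z‖ * ‖v‖ := ContinuousLinearMap.le_opNorm _ _
      _ ≤ M3 * ‖v‖ := by rw [hnormg1] at *; gcongr; exact hM3 z
  · intro z
    rw [hfq]
    -- second derivative
    set Φ : (Euc d →L[ℝ] Euc d →L[ℝ] Euc d →L[ℝ] ℝ) →L[ℝ] (Euc d →L[ℝ] ℝ) :=
      ContinuousLinearMap.compL ℝ (Euc d) (Euc d →L[ℝ] Euc d →L[ℝ] ℝ) ℝ L with hΦ
    have hdg : Differentiable ℝ (fderiv ℝ g) :=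
      (hg2.fderiv_right (m := 1) (by norm_num)).differentiable one_ne_zero
    have hq2 : HasFDerivAt (fun z' => L.comp (fderiv ℝ g z'))
        (Φ.comp (fderiv ℝ (fderiv ℝ g) z)) z := by
      have := Φ.hasFDerivAt.comp z (hdg z).hasFDerivAt
      convert this using 2
      all_goals rfl
    rw [hq2.fderiv]
    have hnorm4 : ‖fderiv ℝ (fderiv ℝ g) z‖ = ‖iteratedFDeriv ℝ 4 f z‖ := by
      have e0 : ‖fderiv ℝ (fderiv ℝ g) z‖ = ‖iteratedFDeriv ℝ 0 (fderiv ℝ (fderiv ℝ g)) z‖ := by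
        rw [norm_iteratedFDeriv_zero]
      rw [e0, norm_iteratedFDeriv_fderiv, norm_iteratedFDeriv_fderiv, hg,
        norm_iteratedFDeriv_fderiv, norm_iteratedFDeriv_fderiv]
    refine ContinuousLinearMap.opNorm_le_bound _ (le_trans (norm_nonneg _) (hM4 z)) ?_
    intro v
    calc ‖(Φ.comp (fderiv ℝ (fderiv ℝ g) z)) v‖ = ‖L.comp (fderiv ℝ (fderiv ℝ g) z v)‖ := rfl
      _ ≤ ‖fderiv ℝ (fderiv ℝ g) z v‖ := by
          refine ContinuousLinearMap.opNorm_le_bound _ (norm_nonneg _) ?_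
          intro w
          calc ‖L.comp (fderiv ℝ (fderiv ℝ g) z v) w‖ = ‖L ((fderiv ℝ (fderiv ℝ g) z v) w)‖ := rfl
            _ ≤ ‖(fderiv ℝ (fderiv ℝ g) z v) w‖ := hLnorm _
            _ ≤ ‖fderiv ℝ (fderiv ℝ g) z v‖ * ‖w‖ := ContinuousLinearMap.le_opNorm _ _
      _ ≤ ‖iteratedFDeriv ℝ 4 f z‖ * ‖v‖ := by
          rw [← hnorm4]; exact ContinuousLinearMap.le_opNorm _ _
      _ ≤ M4 * ‖v‖ := by gcongr; exact hM4 z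

variable {d : ℕ} {Ω : Type} [MeasurableSpace Ω] {μ : Measure Ω} [IsProbabilityMeasure μ]
  {X : ℕ → Ω → Euc d} {S : Matrix (Fin d) (Fin d) ℝ}

lemma sqInt_m (hX : IsIIDCentered μ X S) (m : ℕ) : MemLp (X m) 2 μ := by
  have h0 : MemLp id 2 (μ.map (X 0)) :=
    (memLp_map_measure_iff aestronglyMeasurable_id (hX.meas 0).aemeasurable).2 hX.sqInt
  rw [← hX.ident m] at h0
  exact (memLp_map_measure_iff aestronglyMeasurable_id (hX.meas m).aemeasurable).1 h0

lemma exp_coord_zero (hX : IsIIDCentered μ X S) (m : ℕ) (j : Fin d) :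
    ∫ ω, X m ω j ∂μ = 0 := by
  have hcont : Continuous fun y : Euc d => y j := (EuclideanSpace.proj j).continuous
  have h1 : ∫ ω, X m ω j ∂μ = ∫ y, y j ∂(μ.map (X m)) :=
    (integral_map (hX.meas m).aemeasurable (hcont.aestronglyMeasurable)).symm
  rw [h1, hX.ident m, integral_map (hX.meas 0).aemeasurable hcont.aestronglyMeasurable]
  have h2 : ∫ ω, X 0 ω j ∂μ = (EuclideanSpace.proj j : Euc d →L[ℝ] ℝ) (∫ ω, X 0 ω ∂μ) := by
    rw [← ContinuousLinearMap.integral_comp_comm _ (hX.sqInt.integrable one_le_two)]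
    rfl
  rw [h2, hX.centered]; simp

lemma coord_sq_integrable (hX : IsIIDCentered μ X S) (m : ℕ) (j : Fin d) :
    Integrable (fun ω => X m ω j ^ 2) μ := by
  have : MemLp (fun ω => X m ω j) 2 μ :=
    (EuclideanSpace.proj j : Euc d →L[ℝ] ℝ).comp_memLp' (sqInt_m hX m)
  exact this.integrable_sq

lemma second_moment (hX : IsIIDCentered μ X S) (m : ℕ) :
    ∫ ω, ‖X m ω‖ ^ 2 ∂μ = Matrix.trace S := by
  have hnorm : ∀ ω, ‖X m ω‖ ^ 2 = ∑ j, X m ω j ^ 2 := by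
    intro ω
    rw [EuclideanSpace.norm_eq, Real.sq_sqrt (by positivity)]
    simp [sq]
  have h1 : ∫ ω, ‖X m ω‖ ^ 2 ∂μ = ∑ j, ∫ ω, X m ω j ^ 2 ∂μ := by
    simp_rw [hnorm]
    exact integral_finset_sum _ fun j _ => coord_sq_integrable hX m j
  have h2 : ∀ j : Fin d, ∫ ω, X m ω j ^ 2 ∂μ = ∫ ω, X 0 ω j ^ 2 ∂μ := by
    intro j
    have hcont : Continuous fun y : Euc d => y j ^ 2 :=
      ((EuclideanSpace.proj j).continuous).pow 2
    rw [← integral_map (hX.meas m).aemeasurable hcont.aestronglyMeasurable, hX.ident m,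
      integral_map (hX.meas 0).aemeasurable hcont.aestronglyMeasurable]
  rw [h1]
  rw [Finset.sum_congr rfl fun j _ => h2 j]
  rw [← hX.covEq, Matrix.trace]
  congr 1
  ext j
  simp [Matrix.diag, covMatrix, sq]

lemma indep_sum (hX : IsIIDCentered μ X S) (m : ℕ) :
    IndepFun (pSum X m) (X m) μ := by
  have := hX.indep.indepFun_sum_range_succ hX.meas m
  convert this using 1
  ext ω : 1
  simp [pSum]

lemma pSum_meas (hX : IsIIDCentered μ X S) (m : ℕ) : Measurable (pSum X m) := by
  unfold pSum
  exact Finset.measurable_sum _ fun i _ => hX.meas i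

lemma basis_expand {d : ℕ} (v : Euc d) : ∑ j, v j • EuclideanSpace.single j (1:ℝ) = v := by
  have := (EuclideanSpace.basisFun (Fin d) ℝ).sum_repr v
  simpa [EuclideanSpace.basisFun_apply, EuclideanSpace.basisFun_repr] using this

lemma firstOrder_zero (hX : IsIIDCentered μ X S) (m : ℕ) (j : Fin d)
    (φ : Euc d → ℝ) (hφc : Continuous φ) (B : ℝ) (hB : ∀ z, |φ z| ≤ B) :
    ∫ ω, φ (pSum X m ω) * X m ω j ∂μ = 0 := by
  have hind : IndepFun (fun ω => φ (pSum X m ω)) (fun ω => X m ω j) μ :=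
    (indep_sum hX m).comp hφc.measurable (EuclideanSpace.proj j).continuous.measurable
  have hφint : Integrable (fun ω => φ (pSum X m ω)) μ :=
    (integrable_const B).mono'
      (hφc.stronglyMeasurable.comp_measurable (pSum_meas hX m)).aestronglyMeasurable
      (by filter_upwards with ω; simpa [Real.norm_eq_abs] using hB _)
  have hXjint : Integrable (fun ω => X m ω j) μ :=
    ((EuclideanSpace.proj j : Euc d →L[ℝ] ℝ).comp_memLp' (sqInt_m hX m)).integrable one_le_two
  rw [show (fun ω => φ (pSum X m ω) * X m ω j)
      = (fun ω => φ (pSum X m ω)) * (fun ω => X m ω j) from rfl]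
  rw [hind.integral_mul_eq_mul_integral hφint.aestronglyMeasurable hXjint.aestronglyMeasurable, exp_coord_zero hX m j, mul_zero]

lemma increment_bound (hX : IsIIDCentered μ X S) (m : ℕ) (c : ℝ)
    (q : Euc d → ℝ) (hq : ContDiff ℝ 2 q) (M Bq Bq1 : ℝ)
    (hM : ∀ z, ‖fderiv ℝ (fderiv ℝ q) z‖ ≤ M)
    (hBq : ∀ z, |q z| ≤ Bq) (hBq1 : ∀ z, ‖fderiv ℝ q z‖ ≤ Bq1) (x : Euc d) :
    |(∫ ω, q (x + c • pSum X (m+1) ω) ∂μ) - ∫ ω, q (x + c • pSum X m ω) ∂μ|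
      ≤ M / 2 * c ^ 2 * Matrix.trace S := by
  set Z : Ω → Euc d := fun ω => x + c • pSum X m ω with hZ
  set h : Ω → Euc d := fun ω => c • X m ω with hh
  have hZm : Measurable Z := (((pSum_meas hX m).const_smul c).const_add x)
  have hsucc : ∀ ω, x + c • pSum X (m+1) ω = Z ω + h ω := by
    intro ω
    simp only [hZ, hh, pSum, Finset.sum_range_succ, smul_add, add_assoc]
  have hqc : Continuous q := hq.continuous
  have hBq1' : 0 ≤ Bq1 := le_trans (norm_nonneg _) (hBq1 0)
  have hTe : ∀ (z : Euc d) (j : Fin d),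
      ‖c * fderiv ℝ q z (EuclideanSpace.single j 1)‖ ≤ |c| * Bq1 := by
    intro z j
    rw [norm_mul, Real.norm_eq_abs]
    gcongr
    calc ‖fderiv ℝ q z (EuclideanSpace.single j 1)‖
        ≤ ‖fderiv ℝ q z‖ * ‖EuclideanSpace.single j (1:ℝ)‖ :=
          ContinuousLinearMap.le_opNorm _ _
      _ = ‖fderiv ℝ q z‖ := by rw [EuclideanSpace.norm_single, norm_one, mul_one]
      _ ≤ Bq1 := hBq1 z
  have hq1 : Continuous (fderiv ℝ q) := hq.continuous_fderiv (by norm_num)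
  -- integrability of the three pieces
  have hflat : ∀ ω, fderiv ℝ q (Z ω) (h ω)
      = ∑ j, (c * (fderiv ℝ q (Z ω) (EuclideanSpace.single j 1)) * X m ω j) := by
    intro ω
    have : h ω = ∑ j, (c * X m ω j) • EuclideanSpace.single j (1:ℝ) := by
      rw [hh]
      simp only [mul_smul]
      rw [← Finset.smul_sum]
      congr 1
      exact (basis_expand (X m ω)).symm
    rw [this, map_sum]
    congr 1; ext j
    rw [(fderiv ℝ q (Z ω)).map_smul]
    simp only [smul_eq_mul]; ring
  have hT_int : Integrable (fun ω => fderiv ℝ q (Z ω) (h ω)) μ := by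
    rw [show (fun ω => fderiv ℝ q (Z ω) (h ω))
        = fun ω => ∑ j, (c * (fderiv ℝ q (Z ω) (EuclideanSpace.single j 1)) * X m ω j)
      from funext hflat]
    apply integrable_finset_sum
    intro j _
    have hXj : Integrable (fun ω => X m ω j) μ :=
      ((EuclideanSpace.proj j : Euc d →L[ℝ] ℝ).comp_memLp' (sqInt_m hX m)).integrable one_le_two
    apply Integrable.bdd_mul hXj
    · exact ((continuous_const.mul ((ContinuousLinearMap.apply ℝ ℝ
        (EuclideanSpace.single j 1)).continuous.comp hq1)).stronglyMeasurable.comp_measurable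
        hZm).aestronglyMeasurable
    · exact ae_of_all _ fun ω => hTe (Z ω) j
  have hT_zero : ∫ ω, fderiv ℝ q (Z ω) (h ω) ∂μ = 0 := by
    rw [show (fun ω => fderiv ℝ q (Z ω) (h ω))
        = fun ω => ∑ j, (c * (fderiv ℝ q (Z ω) (EuclideanSpace.single j 1)) * X m ω j)
      from funext hflat]
    rw [integral_finset_sum]
    · apply Finset.sum_eq_zero
      intro j _
      have := firstOrder_zero hX m j
        (fun z => c * fderiv ℝ q (x + c • z) (EuclideanSpace.single j 1))
        (by
          apply continuous_const.mul
          exact (ContinuousLinearMap.apply ℝ ℝ (EuclideanSpace.single j 1)).continuous.comp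
            (hq1.comp (continuous_const.add (continuous_const_smul c))))
        (|c| * Bq1)
        (fun z => by simpa [Real.norm_eq_abs, abs_mul] using hTe (x + c • z) j)
      simpa using this
    · intro j _
      have hXj : Integrable (fun ω => X m ω j) μ :=
        ((EuclideanSpace.proj j : Euc d →L[ℝ] ℝ).comp_memLp' (sqInt_m hX m)).integrable one_le_two
      apply Integrable.bdd_mul hXj
      · exact ((continuous_const.mul ((ContinuousLinearMap.apply ℝ ℝ
          (EuclideanSpace.single j 1)).continuous.comp hq1)).stronglyMeasurable.comp_measurable
          hZm).aestronglyMeasurable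
      · exact ae_of_all _ fun ω => hTe (Z ω) j
  have hA_int : Integrable (fun ω => q (Z ω + h ω)) μ :=
    (integrable_const Bq).mono'
      ((hqc.stronglyMeasurable.comp_measurable
        (hZm.add ((hX.meas m).const_smul c)))).aestronglyMeasurable
      (by filter_upwards with ω; simpa [Real.norm_eq_abs] using hBq _)
  have hB_int : Integrable (fun ω => q (Z ω)) μ :=
    (integrable_const Bq).mono'
      (hqc.stronglyMeasurable.comp_measurable hZm).aestronglyMeasurable
      (by filter_upwards with ω; simpa [Real.norm_eq_abs] using hBq _)
  have hR_int : Integrable (fun ω => q (Z ω + h ω) - q (Z ω) - fderiv ℝ q (Z ω) (h ω)) μ :=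
    (hA_int.sub hB_int).sub hT_int
  have hnormsq_int : Integrable (fun ω => ‖X m ω‖ ^ 2) μ :=
    (sqInt_m hX m).norm.integrable_sq
  have hAB_int : Integrable (fun ω => q (Z ω + h ω) - q (Z ω)) μ := hA_int.sub hB_int
  have split : (∫ ω, q (x + c • pSum X (m+1) ω) ∂μ) - ∫ ω, q (x + c • pSum X m ω) ∂μ
      = ∫ ω, (q (Z ω + h ω) - q (Z ω) - fderiv ℝ q (Z ω) (h ω)) ∂μ := by
    have e1 : (∫ ω, q (x + c • pSum X (m+1) ω) ∂μ) = ∫ ω, q (Z ω + h ω) ∂μ := by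
      congr 1; ext ω; rw [hsucc ω]
    rw [e1, integral_sub hAB_int hT_int, integral_sub hA_int hB_int, hT_zero]
    ring
  rw [split]
  have hpt : ∀ ω, |q (Z ω + h ω) - q (Z ω) - fderiv ℝ q (Z ω) (h ω)|
      ≤ M / 2 * c ^ 2 * ‖X m ω‖ ^ 2 := by
    intro ω
    have := taylor2 q hq M hM (Z ω) (h ω)
    have hns : ‖h ω‖ ^ 2 = c ^ 2 * ‖X m ω‖ ^ 2 := by
      rw [hh]; simp [norm_smul, mul_pow, sq_abs]
    rw [hns] at this
    calc |q (Z ω + h ω) - q (Z ω) - fderiv ℝ q (Z ω) (h ω)|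
        ≤ M / 2 * (c ^ 2 * ‖X m ω‖ ^ 2) := this
      _ = M / 2 * c ^ 2 * ‖X m ω‖ ^ 2 := by ring
  calc |∫ ω, (q (Z ω + h ω) - q (Z ω) - fderiv ℝ q (Z ω) (h ω)) ∂μ|
      ≤ ∫ ω, |q (Z ω + h ω) - q (Z ω) - fderiv ℝ q (Z ω) (h ω)| ∂μ := by
        rw [← Real.norm_eq_abs]
        refine (norm_integral_le_integral_norm _).trans (le_of_eq ?_)
        simp [Real.norm_eq_abs]
    _ ≤ ∫ ω, M / 2 * c ^ 2 * ‖X m ω‖ ^ 2 ∂μ := by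
        apply integral_mono hR_int.abs (hnormsq_int.const_mul _)
        intro ω; exact hpt ω
    _ = M / 2 * c ^ 2 * Matrix.trace S := by
        rw [integral_const_mul, second_moment hX m]

end AuxLemmas

/-- **Time-increment bound for the Laplacian of the scheme**: for every `f ∈ C⁴(ℝ^d)`,
`n ≥ 1`, `x ∈ ℝ^d` and `t ≥ 0`,
`|tr(D²u_n(x, t + 1/n)) − tr(D²u_n(x,t))| ≤ d ‖f‖_{C⁴} tr(Σ) / (2n)`. -/
theorem scheme_hessian_time_increment
    {d : ℕ} (hd : 1 ≤ d) {Ω : Type} [MeasurableSpace Ω] (μ : Measure Ω)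
    [IsProbabilityMeasure μ] (X : ℕ → Ω → Euc d) (S : Matrix (Fin d) (Fin d) ℝ)
    (hX : IsIIDCentered μ X S)
    (f : Euc d → ℝ) (hf : MemCk 4 f)
    (n : ℕ) (hn : 1 ≤ n) (x : Euc d) (t : ℝ) (ht : 0 ≤ t) :
    |Matrix.trace (hessian (fun y => schemeU μ X f n y (t + 1 / n)) x) -
        Matrix.trace (hessian (fun y => schemeU μ X f n y t) x)| ≤
      d * ckNorm 4 f * Matrix.trace S / (2 * n) := by
  classical
  have hn0 : (0:ℝ) < n := by exact_mod_cast hn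
  set m : ℕ := ⌊(n:ℝ) * t⌋₊ with hm
  set c : ℝ := (Real.sqrt n)⁻¹ with hc
  have hfloor : ⌊(n:ℝ) * (t + 1/n)⌋₊ = m + 1 := by
    have he : (n:ℝ) * (t + 1/n) = n * t + 1 := by field_simp
    rw [he, Nat.floor_add_one (by positivity)]
  have hf4 : ContDiff ℝ 4 f := hf.1
  have hf2 : ContDiff ℝ 2 f := hf4.of_le (by norm_num)
  obtain ⟨M0, hM0⟩ := hf.2 0 (by norm_num)
  obtain ⟨M1, hM1⟩ := hf.2 1 (by norm_num)
  obtain ⟨M2, hM2⟩ := hf.2 2 (by norm_num)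
  obtain ⟨M3, hM3⟩ := hf.2 3 (by norm_num)
  obtain ⟨M4b, hM4b⟩ := hf.2 4 le_rfl
  set M4 : ℝ := ⨆ z : Euc d, ‖iteratedFDeriv ℝ 4 f z‖ with hM4def
  have hbdd : BddAbove (Set.range fun z : Euc d => ‖iteratedFDeriv ℝ 4 f z‖) :=
    ⟨M4b, by rintro _ ⟨z, rfl⟩; exact hM4b z⟩
  have hM4 : ∀ z, ‖iteratedFDeriv ℝ 4 f z‖ ≤ M4 := fun z => le_ciSup hbdd z
  have hM4nn : 0 ≤ M4 := le_trans (norm_nonneg _) (hM4 0)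
  have hB0 : ∀ z, ‖f z‖ ≤ M0 := fun z => by
    rw [← norm_iteratedFDeriv_zero (𝕜 := ℝ) (f := f) (x := z)]; exact hM0 z
  have hB1 : ∀ z, ‖fderiv ℝ f z‖ ≤ M1 := fun z => by
    rw [← norm_iteratedFDeriv_zero (𝕜 := ℝ) (f := fderiv ℝ f) (x := z),
      norm_iteratedFDeriv_fderiv]
    exact hM1 z
  have hB2 : ∀ z, ‖fderiv ℝ (fderiv ℝ f) z‖ ≤ M2 := fun z => by
    rw [← norm_iteratedFDeriv_zero (𝕜 := ℝ) (f := fderiv ℝ (fderiv ℝ f)) (x := z),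
      norm_iteratedFDeriv_fderiv, norm_iteratedFDeriv_fderiv]
    exact hM2 z
  -- trace representation
  have htrace : ∀ k : ℕ,
      Matrix.trace (hessian (fun y => ∫ ω, f (y + c • pSum X k ω) ∂μ) x)
        = ∑ i : Fin d, ∫ ω, fderiv ℝ (fderiv ℝ f) (x + c • pSum X k ω)
            (EuclideanSpace.single i 1) (EuclideanSpace.single i 1) ∂μ := by
    intro k
    rw [Matrix.trace]
    refine Finset.sum_congr rfl fun i _ => ?_
    show iteratedFDeriv ℝ 2 _ x ![EuclideanSpace.single i 1, EuclideanSpace.single i 1] = _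
    exact hess_trace_integral μ (fun ω => c • pSum X k ω)
      ((pSum_meas hX k).const_smul c) f hf2 M0 M1 M2 hB0 hB1 hB2 x i i
  have hsm : (fun y => schemeU μ X f n y t) = fun y => ∫ ω, f (y + c • pSum X m ω) ∂μ := by
    funext y; rw [schemeU]
  have hsm' : (fun y => schemeU μ X f n y (t + 1/n))
      = fun y => ∫ ω, f (y + c • pSum X (m+1) ω) ∂μ := by
    funext y; rw [schemeU, hfloor]
  rw [hsm, hsm', htrace m, htrace (m+1), ← Finset.sum_sub_distrib]
  have hq : ∀ i : Fin d,
      |(∫ ω, fderiv ℝ (fderiv ℝ f) (x + c • pSum X (m+1) ω)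
            (EuclideanSpace.single i 1) (EuclideanSpace.single i 1) ∂μ) -
        ∫ ω, fderiv ℝ (fderiv ℝ f) (x + c • pSum X m ω)
            (EuclideanSpace.single i 1) (EuclideanSpace.single i 1) ∂μ|
        ≤ M4 / 2 * c ^ 2 * Matrix.trace S := by
    intro i
    obtain ⟨hqc, hqb, hqb1, hqb2⟩ := qfacts f hf4 M2 M3 M4 hM2 hM3 hM4 i
    exact increment_bound hX m c _ hqc M4 M2 M3 hqb2 hqb hqb1 x
  calc |∑ i : Fin d, ((∫ ω, fderiv ℝ (fderiv ℝ f) (x + c • pSum X (m+1) ω)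
            (EuclideanSpace.single i 1) (EuclideanSpace.single i 1) ∂μ) -
          ∫ ω, fderiv ℝ (fderiv ℝ f) (x + c • pSum X m ω)
            (EuclideanSpace.single i 1) (EuclideanSpace.single i 1) ∂μ)|
      ≤ ∑ i : Fin d, |(∫ ω, fderiv ℝ (fderiv ℝ f) (x + c • pSum X (m+1) ω)
            (EuclideanSpace.single i 1) (EuclideanSpace.single i 1) ∂μ) -
          ∫ ω, fderiv ℝ (fderiv ℝ f) (x + c • pSum X m ω)
            (EuclideanSpace.single i 1) (EuclideanSpace.single i 1) ∂μ| :=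
        Finset.abs_sum_le_sum_abs _ _
    _ ≤ ∑ _i : Fin d, M4 / 2 * c ^ 2 * Matrix.trace S :=
        Finset.sum_le_sum fun i _ => hq i
    _ = d * (M4 / 2 * c ^ 2 * Matrix.trace S) := by
        rw [Finset.sum_const, Finset.card_univ, Fintype.card_fin, nsmul_eq_mul]
    _ ≤ d * ckNorm 4 f * Matrix.trace S / (2 * n) := by
        have hc2 : c ^ 2 = (n : ℝ)⁻¹ := by
          rw [hc, inv_pow, Real.sq_sqrt hn0.le]
        have htrS : 0 ≤ Matrix.trace S := by
          rw [← second_moment hX 0]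
          exact integral_nonneg fun ω => by positivity
        have hM4le : M4 ≤ ckNorm 4 f := by
          rw [ckNorm]
          have h4 : (4 : ℕ) ∈ Finset.range 5 := by norm_num
          exact Finset.single_le_sum
            (f := fun i => ⨆ z : Euc d, ‖iteratedFDeriv ℝ i f z‖)
            (fun i _ => Real.iSup_nonneg fun z => norm_nonneg _) h4
        rw [hc2]
        have : (d:ℝ) * (M4 / 2 * (n:ℝ)⁻¹ * Matrix.trace S)
            = (d:ℝ) * M4 * Matrix.trace S / (2 * n) := by
          field_simp
        rw [this]
        gcongr

end
end

section
/- Consistency of the scheme (quantitative): there exists a constant C depending only on d such that for every f ∈ C^3(ℝ^d), every T > 0, every γ ∈ (0,1] and every integer n ≥ 1, sup_{(x,t) ∈ ℝ^d × [0,T]} | E[ (u_n(x + n^{-1/2} X_{⌊nt⌋+1}, t) − u_n(x,t)) / n^{-1} ] − (1/2) tr(Σ D²u_n(x,t)) | ≤ C · ‖f‖_{C^3} · E[|X_1|^{2+γ}] · n^{-γ/2}. -/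
open MeasureTheory ProbabilityTheory Filter Topology Set

noncomputable section

set_option maxHeartbeats 1600000

instance instNACGEucBil (d : ℕ) : NormedAddCommGroup (Euc d →L[ℝ] Euc d →L[ℝ] ℝ) :=
  ContinuousLinearMap.toNormedAddCommGroup

instance instNSEucBil (d : ℕ) : NormedSpace ℝ (Euc d →L[ℝ] Euc d →L[ℝ] ℝ) :=
  ContinuousLinearMap.toNormedSpace

section Aux
variable {E F : Type*} [NormedAddCommGroup E] [NormedSpace ℝ E]
  [NormedAddCommGroup F] [NormedSpace ℝ F]

lemma lip_of_bounded {φ : E → F} {φ' : E → E →L[ℝ] F} {M : ℝ}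
    (hφ : ∀ u, HasFDerivAt φ (φ' u) u) (hM : ∀ u, ‖φ' u‖ ≤ M) (u v : E) :
    ‖φ u - φ v‖ ≤ M * ‖u - v‖ :=
  Convex.norm_image_sub_le_of_norm_hasFDerivWithin_le
    (fun w _ => (hφ w).hasFDerivWithinAt) (fun w _ => hM w) convex_univ trivial trivial

lemma taylor_one_bound {φ : E → F} {φ' : E → E →L[ℝ] F} {M : ℝ} (hM : 0 ≤ M)
    (hφ : ∀ u, HasFDerivAt φ (φ' u) u)
    (hlip : ∀ u v, ‖φ' u - φ' v‖ ≤ M * ‖u - v‖) (x h : E) :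
    ‖φ (x + h) - φ x - φ' x h‖ ≤ M * ‖h‖ * ‖h‖ := by
  have key := Convex.norm_image_sub_le_of_norm_hasFDerivWithin_le
    (f := fun u => φ u - φ' x u) (f' := fun u => φ' u - φ' x)
    (s := Metric.closedBall x ‖h‖) (C := M * ‖h‖) (x := x) (y := x + h)
    (fun u _ => ((hφ u).sub ((φ' x).hasFDerivAt)).hasFDerivWithinAt)
    (fun u hu => (hlip u x).trans (mul_le_mul_of_nonneg_left
      (by simpa [dist_eq_norm] using hu) hM))
    (convex_closedBall x ‖h‖) (Metric.mem_closedBall_self (norm_nonneg h))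
    (by simp [Metric.mem_closedBall, dist_eq_norm])
  have e1 : φ (x + h) - φ x - (φ' x) h
      = φ (x + h) - ((φ' x) x + (φ' x) h) - (φ x - (φ' x) x) := by abel
  rw [e1]; simpa using key

lemma taylor_two_bound {f : E → F} {f' : E → E →L[ℝ] F}
    {f'' : E → E →L[ℝ] E →L[ℝ] F} {M : ℝ} (hM : 0 ≤ M)
    (hf' : ∀ u, HasFDerivAt f (f' u) u)
    (hf'' : ∀ u, HasFDerivAt f' (f'' u) u)
    (hlip : ∀ u v, ‖f'' u - f'' v‖ ≤ M * ‖u - v‖) (x h : E) :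
    ‖f (x + h) - f x - f' x h - (2:ℝ)⁻¹ • (f'' x h h)‖ ≤ M * ‖h‖ * ‖h‖ * ‖h‖ := by
  have hsymm : ∀ v w, f'' x v w = f'' x w v := second_derivative_symmetric hf' (hf'' x)
  set χ : E → F := fun u => f u - f' x u - (2:ℝ)⁻¹ • (f'' x (u - x) (u - x)) with hχdef
  set χ' : E → E →L[ℝ] F := fun u => f' u - f' x - f'' x (u - x) with hχ'def
  have hχ : ∀ u, HasFDerivAt χ (χ' u) u := by
    intro u
    have h1 : HasFDerivAt (fun y => f'' x (y - x)) (f'' x) u := by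
      have := (f'' x).hasFDerivAt.comp u ((hasFDerivAt_id u).sub_const x)
      rw [ContinuousLinearMap.comp_id] at this
      simpa only [Function.comp_def, id_eq] using this
    have h2 := h1.clm_apply ((hasFDerivAt_id u).sub_const x)
    simp only [id_eq] at h2
    have hflip : (f'' x).flip (u - x) = (f'' x) (u - x) := by
      ext w; simpa using hsymm w (u - x)
    have h3 : HasFDerivAt (fun y => f'' x (y - x) (y - x))
        (f'' x (u - x) + f'' x (u - x)) u := by
      convert h2 using 1
      rw [ContinuousLinearMap.comp_id, hflip]
    have h4 := ((hf' u).sub ((f' x).hasFDerivAt)).sub (h3.const_smul ((2:ℝ)⁻¹))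
    convert h4 using 1
    · funext y; rfl
    rw [hχ'def]
    simp only []
    rw [smul_add]
    ext w
    simp only [ContinuousLinearMap.sub_apply, ContinuousLinearMap.add_apply,
      ContinuousLinearMap.smul_apply, ContinuousLinearMap.coe_smul', Pi.smul_apply,
      ContinuousLinearMap.coe_sub', Pi.sub_apply, smul_add]
    have h5 : (2:ℝ)⁻¹ • ((f'' x) (u - x)) w + (2:ℝ)⁻¹ • ((f'' x) (u - x)) w
        = ((f'' x) (u - x)) w := by rw [← add_smul]; norm_num
    rw [h5]
  have hbd : ∀ u ∈ Metric.closedBall x ‖h‖, ‖χ' u‖ ≤ M * ‖h‖ * ‖h‖ := by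
    intro u hu
    have hux : ‖u - x‖ ≤ ‖h‖ := by simpa [dist_eq_norm] using hu
    have := taylor_one_bound hM hf'' hlip x (u - x)
    rw [add_sub_cancel] at this
    refine le_trans (by simpa [hχ'def] using this) ?_
    have h0 : (0:ℝ) ≤ ‖u - x‖ := norm_nonneg _
    have h6 : ‖u - x‖ * ‖u - x‖ ≤ ‖h‖ * ‖h‖ := mul_le_mul hux hux h0 (norm_nonneg h)
    calc M * ‖u - x‖ * ‖u - x‖ = M * (‖u - x‖ * ‖u - x‖) := by ring
      _ ≤ M * (‖h‖ * ‖h‖) := mul_le_mul_of_nonneg_left h6 hM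
      _ = M * ‖h‖ * ‖h‖ := by ring
  have key := Convex.norm_image_sub_le_of_norm_hasFDerivWithin_le
    (f := χ) (f' := χ') (s := Metric.closedBall x ‖h‖) (C := M * ‖h‖ * ‖h‖)
    (x := x) (y := x + h)
    (fun u hu => (hχ u).hasFDerivWithinAt) hbd
    (convex_closedBall x ‖h‖) (Metric.mem_closedBall_self (norm_nonneg h))
    (by simp [Metric.mem_closedBall, dist_eq_norm])
  have e1 : χ (x + h) - χ x = f (x + h) - f x - f' x h - (2:ℝ)⁻¹ • (f'' x h h) := by
    rw [hχdef]
    simp only [add_sub_cancel_left, sub_self, map_zero, ContinuousLinearMap.zero_apply,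
      smul_zero, sub_zero, map_add]
    abel
  rw [← e1]
  simpa using key

lemma hasFDerivAt_integral_shift {Ω : Type} [MeasurableSpace Ω] (μ : Measure Ω)
    [IsProbabilityMeasure μ] {d : ℕ} {Z : Ω → Euc d} (hZ : Measurable Z)
    {G : Type*} [NormedAddCommGroup G] [NormedSpace ℝ G] [CompleteSpace G]
    {F : Euc d → G} {F' : Euc d → (Euc d →L[ℝ] G)} {M0 M1 : ℝ}
    (hFc : Continuous F) (hF'c : Continuous F')
    (hd : ∀ u, HasFDerivAt F (F' u) u)
    (hM0 : ∀ u, ‖F u‖ ≤ M0) (hM1 : ∀ u, ‖F' u‖ ≤ M1) (x : Euc d) :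
    HasFDerivAt (fun y => ∫ ω, F (y + Z ω) ∂μ) (∫ ω, F' (x + Z ω) ∂μ) x := by
  have smF : ∀ y : Euc d, AEStronglyMeasurable (fun ω => F (y + Z ω)) μ := fun y =>
    (hFc.comp_stronglyMeasurable (hZ.const_add y).stronglyMeasurable).aestronglyMeasurable
  have smF' : ∀ y : Euc d, AEStronglyMeasurable (fun ω => F' (y + Z ω)) μ := fun y =>
    (hF'c.comp_stronglyMeasurable (hZ.const_add y).stronglyMeasurable).aestronglyMeasurable
  exact hasFDerivAt_integral_of_dominated_of_fderiv_le (s := Metric.ball x 1) (bound := fun _ => M1)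
    (F' := fun y ω => F' (y + Z ω))
    (Metric.ball_mem_nhds x one_pos)
    (Filter.Eventually.of_forall smF)
    ((integrable_const M0).mono' (smF x) (Filter.Eventually.of_forall fun ω => hM0 _))
    (smF' x)
    (Filter.Eventually.of_forall fun ω y _ => hM1 _)
    (integrable_const M1)
    (Filter.Eventually.of_forall fun ω y _ => by
      have := (hd (y + Z ω)).comp y ((hasFDerivAt_id y).add_const (Z ω))
      rw [ContinuousLinearMap.comp_id] at this
      simpa only [Function.comp_def, id_eq] using this)

lemma euclidean_eq_sum_single {d : ℕ} (u : Euc d) :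
    u = ∑ i, u i • EuclideanSpace.single i (1:ℝ) := by
  have := (EuclideanSpace.basisFun (Fin d) ℝ).sum_repr u
  simp only [EuclideanSpace.basisFun_repr, EuclideanSpace.basisFun_apply] at this
  exact this.symm

lemma clm_bilin_expand {d : ℕ} (T : Euc d →L[ℝ] Euc d →L[ℝ] ℝ) (u v : Euc d) :
    T u v = ∑ i, ∑ j, u i * v j *
      T (EuclideanSpace.single i 1) (EuclideanSpace.single j 1) := by
  have h1 : T u = ∑ i, u i • T (EuclideanSpace.single i 1) := by
    conv_lhs => rw [euclidean_eq_sum_single u]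
    rw [map_sum]
    exact Finset.sum_congr rfl fun i _ => by rw [_root_.map_smul]
  rw [h1, ContinuousLinearMap.sum_apply]
  refine Finset.sum_congr rfl fun i _ => ?_
  rw [ContinuousLinearMap.smul_apply]
  have h2 : T (EuclideanSpace.single i 1) v
      = ∑ j, v j • T (EuclideanSpace.single i 1) (EuclideanSpace.single j 1) := by
    conv_lhs => rw [euclidean_eq_sum_single v]
    rw [map_sum]
    exact Finset.sum_congr rfl fun j _ => by rw [_root_.map_smul]
  rw [h2, Finset.smul_sum]
  refine Finset.sum_congr rfl fun j _ => ?_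
  simp only [smul_eq_mul]
  ring

end Aux


section KeyAux
lemma abs_coord_le_norm {d : ℕ} (u : Euc d) (i : Fin d) : |u i| ≤ ‖u‖ := by
  rw [EuclideanSpace.norm_eq]
  rw [show |u i| = Real.sqrt (|u i|^2) by rw [Real.sqrt_sq_eq_abs, abs_abs]]
  apply Real.sqrt_le_sqrt
  rw [sq_abs]
  calc u i ^ 2 ≤ ∑ j, u j ^ 2 :=
        Finset.single_le_sum (f := fun j => u j ^ 2) (fun j _ => sq_nonneg _) (Finset.mem_univ i)
    _ = ∑ j, ‖u j‖ ^ 2 := by simp [Real.norm_eq_abs, sq_abs]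
end KeyAux

theorem key_estimate {d : ℕ} {Ω : Type} [MeasurableSpace Ω] (μ : Measure Ω)
    [IsProbabilityMeasure μ] (f : Euc d → ℝ) (hf : MemCk 3 f)
    {γ : ℝ} (hγ : γ ∈ Set.Ioc (0:ℝ) 1) {n : ℕ} (hn : 1 ≤ n)
    (Y : Ω → Euc d) (hYm : Measurable Y) (W : Ω → Euc d) (hWm : Measurable W)
    (S : Matrix (Fin d) (Fin d) ℝ)
    (hY2 : MemLp Y 2 μ) (hY0 : ∫ ω, Y ω ∂μ = 0)
    (hScov : ∀ i j, ∫ ω, Y ω i * Y ω j ∂μ = S i j)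
    (hSsymm : ∀ i j, S i j = S j i)
    (hmom : Integrable (fun ω => ‖Y ω‖ ^ ((2:ℝ) + γ)) μ)
    (x : Euc d) :
    |(n : ℝ) * ∫ ω, ((∫ ω', f (x + (Real.sqrt n)⁻¹ • Y ω + (Real.sqrt n)⁻¹ • W ω') ∂μ) -
          (∫ ω', f (x + (Real.sqrt n)⁻¹ • W ω') ∂μ)) ∂μ -
        Matrix.trace (S * hessian
          (fun y => ∫ ω', f (y + (Real.sqrt n)⁻¹ • W ω') ∂μ) x) / 2| ≤
      3 * ckNorm 3 f * (∫ ω, ‖Y ω‖ ^ ((2:ℝ) + γ) ∂μ) * (n : ℝ) ^ (-(γ / 2)) := by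
  obtain ⟨hγ0, hγ1⟩ := hγ
  have hn1 : (1:ℝ) ≤ (n:ℝ) := by exact_mod_cast hn
  have hn0 : (0:ℝ) < (n:ℝ) := by linarith
  set c : ℝ := (Real.sqrt n)⁻¹ with hc
  have hc0 : 0 < c := inv_pos.mpr (Real.sqrt_pos.mpr hn0)
  set Z : Ω → Euc d := fun ω => c • W ω with hZdef
  have hZm : Measurable Z := hWm.const_smul c
  set g : Euc d → ℝ := fun y => ∫ ω', f (y + Z ω') ∂μ with hgdef
  set hv : Ω → Euc d := fun ω => c • Y ω with hhv
  -- derivatives of f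
  set f' : Euc d → Euc d →L[ℝ] ℝ := fderiv ℝ f with hf'def
  set A : Euc d → Euc d →L[ℝ] Euc d →L[ℝ] ℝ := fderiv ℝ f' with hAdef
  have hf3 : ContDiff ℝ 3 f := hf.1
  have hf'2 : ContDiff ℝ 2 f' := hf3.fderiv_right (by norm_num)
  have hA1 : ContDiff ℝ 1 A := hf'2.fderiv_right (by norm_num)
  have hdf : ∀ u, HasFDerivAt f (f' u) u := fun u =>
    (hf3.differentiable (by norm_num) u).hasFDerivAt
  have hdf' : ∀ u, HasFDerivAt f' (A u) u := fun u =>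
    (hf'2.differentiable (by norm_num) u).hasFDerivAt
  have hdA : ∀ u, HasFDerivAt A (fderiv ℝ A u) u := fun u =>
    (hA1.differentiable (by norm_num) u).hasFDerivAt
  have hfc : Continuous f := hf3.continuous
  have hf'c : Continuous f' := hf'2.continuous
  have hAc : Continuous A := hA1.continuous
  -- sup norms
  set B : ℕ → ℝ := fun k => ⨆ y : Euc d, ‖iteratedFDeriv ℝ k f y‖ with hB
  have hBbd : ∀ k, k ≤ 3 → ∀ y, ‖iteratedFDeriv ℝ k f y‖ ≤ B k := by
    intro k hk y
    obtain ⟨M, hM⟩ := hf.2 k hk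
    exact le_ciSup ⟨M, by rintro _ ⟨z, rfl⟩; exact hM z⟩ y
  have hB0 : ∀ k, k ≤ 3 → 0 ≤ B k := fun k hk =>
    le_trans (norm_nonneg _) (hBbd k hk 0)
  have hBck : ∀ k, k ≤ 3 → B k ≤ ckNorm 3 f := by
    intro k hk
    have hckn : ckNorm 3 f = ∑ i ∈ Finset.range 4, B i := rfl
    rw [hckn]
    exact Finset.single_le_sum (f := fun i => B i)
      (fun i hi => hB0 i (Nat.lt_succ_iff.mp (Finset.mem_range.mp hi)))
      (Finset.mem_range.mpr (by omega))
  have hMf : ∀ u, ‖f u‖ ≤ B 0 := fun u => by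
    have := hBbd 0 (by norm_num) u
    rwa [norm_iteratedFDeriv_zero] at this
  have hM1 : ∀ u, ‖f' u‖ ≤ B 1 := fun u => by
    have := hBbd 1 (by norm_num) u
    rwa [← norm_iteratedFDeriv_fderiv, norm_iteratedFDeriv_zero] at this
  have hM2 : ∀ u, ‖A u‖ ≤ B 2 := fun u => by
    have := hBbd 2 (by norm_num) u
    rwa [show (2:ℕ) = 1 + 1 from rfl, ← norm_iteratedFDeriv_fderiv,
      ← norm_iteratedFDeriv_fderiv, norm_iteratedFDeriv_zero] at this
  have hM3 : ∀ u, ‖fderiv ℝ A u‖ ≤ B 3 := fun u => by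
    have := hBbd 3 (by norm_num) u
    rwa [show (3:ℕ) = 1 + 1 + 1 from rfl, ← norm_iteratedFDeriv_fderiv,
      ← norm_iteratedFDeriv_fderiv, ← norm_iteratedFDeriv_fderiv,
      norm_iteratedFDeriv_zero] at this
  have hlipf' : ∀ u v, ‖f' u - f' v‖ ≤ B 2 * ‖u - v‖ := lip_of_bounded hdf' hM2
  have hlipA : ∀ u v, ‖A u - A v‖ ≤ B 3 * ‖u - v‖ := lip_of_bounded hdA hM3
  -- derivatives of g
  have hg1 : ∀ y, HasFDerivAt g (∫ ω', f' (y + Z ω') ∂μ) y := fun y =>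
    hasFDerivAt_integral_shift μ hZm hfc hf'c hdf hMf hM1 y
  have hg2 : ∀ y, HasFDerivAt (fun y => ∫ ω', f' (y + Z ω') ∂μ)
      (∫ ω', A (y + Z ω') ∂μ) y := fun y =>
    hasFDerivAt_integral_shift μ hZm hf'c hAc hdf' hM1 hM2 y
  have hgC : Continuous g := by
    rw [continuous_iff_continuousAt]
    exact fun y => (hg1 y).continuousAt
  set Φx : Euc d →L[ℝ] ℝ := ∫ ω', f' (x + Z ω') ∂μ with hΦx
  set Ψ : Euc d →L[ℝ] (Euc d →L[ℝ] ℝ) := ∫ ω', A (x + Z ω') ∂μ with hΨ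
  have hfderivg : fderiv ℝ g = fun y => ∫ ω', f' (y + Z ω') ∂μ :=
    funext fun y => (hg1 y).fderiv
  have hΨeq : fderiv ℝ (fderiv ℝ g) x = Ψ := by
    rw [hfderivg]; exact (hg2 x).fderiv
  -- integrability of CLM-valued maps
  have smf' : ∀ y : Euc d, AEStronglyMeasurable (fun ω' => f' (y + Z ω')) μ := fun y =>
    (hf'c.comp_stronglyMeasurable (hZm.const_add y).stronglyMeasurable).aestronglyMeasurable
  have smA : ∀ y : Euc d, AEStronglyMeasurable (fun ω' => A (y + Z ω')) μ := fun y =>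
    (hAc.comp_stronglyMeasurable (hZm.const_add y).stronglyMeasurable).aestronglyMeasurable
  have hintf' : Integrable (fun ω' => f' (x + Z ω')) μ :=
    (integrable_const (B 1)).mono' (smf' x) (Filter.Eventually.of_forall fun ω' => hM1 _)
  have hintA : Integrable (fun ω' => A (x + Z ω')) μ :=
    (integrable_const (B 2)).mono' (smA x) (Filter.Eventually.of_forall fun ω' => hM2 _)
  have hintAu : ∀ u : Euc d, Integrable (fun ω' => A (x + Z ω') u) μ := fun u => by
    exact ContinuousLinearMap.integrable_comp (𝕜 := ℝ) (E := Euc d →L[ℝ] ℝ)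
      (H := Euc d →L[ℝ] (Euc d →L[ℝ] ℝ))
      (ContinuousLinearMap.apply ℝ (Euc d →L[ℝ] ℝ) u) hintA
  have hΨapp : ∀ u v : Euc d, Ψ u v = ∫ ω', A (x + Z ω') u v ∂μ := by
    intro u v
    rw [hΨ, ContinuousLinearMap.integral_apply hintA u,
      ContinuousLinearMap.integral_apply (hintAu u) v]
  -- hessian entries
  set e : Fin d → Euc d := fun i => EuclideanSpace.single i (1:ℝ) with he
  have hhess : ∀ i j, hessian g x i j = Ψ (e i) (e j) := by
    intro i j
    show iteratedFDeriv ℝ 2 g x ![e i, e j] = Ψ (e i) (e j)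
    rw [iteratedFDeriv_two_apply, hΨeq]
    rfl
  -- coordinate measurability and integrability for Y
  have hYcoord : ∀ i : Fin d, Measurable fun ω => Y ω i := fun i =>
    (measurable_pi_apply i).comp
      ((PiLp.continuous_ofLp (p := 2) (β := fun _ : Fin d => ℝ)).measurable.comp hYm)
  have hY1 : Integrable Y μ := (hY2.mono_exponent (by norm_num)).integrable le_rfl
  have hYn2 : Integrable (fun ω => ‖Y ω‖ ^ (2:ℝ)) μ := by
    have := hY2.integrable_norm_rpow (by norm_num) (by norm_num)
    simpa using this
  have hYij : ∀ i j, Integrable (fun ω => Y ω i * Y ω j) μ := by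
    intro i j
    refine hYn2.mono' ((hYcoord i).mul (hYcoord j)).aestronglyMeasurable
      (Filter.Eventually.of_forall fun ω => ?_)
    rw [Real.norm_eq_abs, abs_mul]
    calc |Y ω i| * |Y ω j| ≤ ‖Y ω‖ * ‖Y ω‖ :=
          mul_le_mul (abs_coord_le_norm _ i) (abs_coord_le_norm _ j) (abs_nonneg _)
            (norm_nonneg _)
      _ = ‖Y ω‖ ^ (2:ℝ) := by
          rw [show (2:ℝ) = ((2:ℕ):ℝ) by norm_num, Real.rpow_natCast]; ring
  have hhvint : Integrable hv μ := by
    have := hY1.smul c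
    exact this
  have hvm : Measurable hv := hYm.const_smul c
  have hhvij : ∀ i j, Integrable (fun ω => hv ω i * hv ω j) μ := by
    intro i j
    have hrw : (fun ω => hv ω i * hv ω j) = fun ω => (c * c) * (Y ω i * Y ω j) := by
      funext ω
      show (c • Y ω) i * (c • Y ω) j = _
      simp only [PiLp.smul_apply, smul_eq_mul]
      ring
    rw [hrw]
    exact (hYij i j).const_mul _
  have hcc : c * c = (n:ℝ)⁻¹ := by
    rw [hc, ← mul_inv]
    congr 1
    exact Real.mul_self_sqrt (le_of_lt hn0)
  have hhvij_int : ∀ i j, ∫ ω, hv ω i * hv ω j ∂μ = (n:ℝ)⁻¹ * S i j := by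
    intro i j
    have hrw : (fun ω => hv ω i * hv ω j) = fun ω => (n:ℝ)⁻¹ * (Y ω i * Y ω j) := by
      funext ω
      show (c • Y ω) i * (c • Y ω) j = _
      simp only [PiLp.smul_apply, smul_eq_mul]
      rw [← hcc]; ring
    rw [hrw, integral_const_mul, hScov i j]
  have hhv0 : ∫ ω, hv ω ∂μ = 0 := by
    rw [hhv, integral_smul, hY0, smul_zero]
  -- remainder and its bound
  set K : ℝ := 2 * B 2 + B 3 with hK
  have hB2 : 0 ≤ B 2 := hB0 2 (by norm_num)
  have hB3 : 0 ≤ B 3 := hB0 3 (by norm_num)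
  have hK0 : 0 ≤ K := by rw [hK]; linarith
  set R : Euc d → Euc d → ℝ := fun y k => f (y + k) - f y - f' y k
      - 2⁻¹ * (A y k k) with hR
  have hpow3 : ∀ r : ℝ, 0 ≤ r → r ≤ 1 → r * r * r ≤ r ^ ((2:ℝ) + γ) := by
    intro r h0 h1
    rcases eq_or_lt_of_le h0 with h | h
    · rw [← h, Real.zero_rpow (by linarith)]; norm_num
    · have e3 : r * r * r = r ^ ((3:ℕ):ℝ) := by rw [Real.rpow_natCast]; ring
      rw [e3]
      exact Real.rpow_le_rpow_of_exponent_ge h h1 (by push_cast; linarith)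
  have hpow2 : ∀ r : ℝ, 1 ≤ r → r * r ≤ r ^ ((2:ℝ) + γ) := by
    intro r h1
    have e2 : r * r = r ^ ((2:ℕ):ℝ) := by rw [Real.rpow_natCast]; ring
    rw [e2]
    exact Real.rpow_le_rpow_of_exponent_le h1 (by push_cast; linarith)
  have hRb : ∀ y k, |R y k| ≤ K * ‖k‖ ^ ((2:ℝ) + γ) := by
    intro y k
    have hrpow0 : (0:ℝ) ≤ ‖k‖ ^ ((2:ℝ) + γ) := Real.rpow_nonneg (norm_nonneg _) _
    rcases le_or_gt ‖k‖ 1 with hk1 | hk1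
    · have t3 := taylor_two_bound hB3 hdf hdf' hlipA y k
      have hRe : R y k = f (y + k) - f y - f' y k - (2:ℝ)⁻¹ • (A y k k) := by
        rw [hR]; simp [smul_eq_mul]
      calc |R y k| = ‖f (y + k) - f y - f' y k - (2:ℝ)⁻¹ • (A y k k)‖ := by
            rw [hRe, Real.norm_eq_abs]
        _ ≤ B 3 * ‖k‖ * ‖k‖ * ‖k‖ := t3
        _ = B 3 * (‖k‖ * ‖k‖ * ‖k‖) := by ring
        _ ≤ B 3 * ‖k‖ ^ ((2:ℝ) + γ) :=
            mul_le_mul_of_nonneg_left (hpow3 _ (norm_nonneg _) hk1) hB3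
        _ ≤ K * ‖k‖ ^ ((2:ℝ) + γ) := by
            refine mul_le_mul_of_nonneg_right ?_ hrpow0
            rw [hK]; linarith
    · have t2 := taylor_one_bound hB2 hdf hlipf' y k
      rw [Real.norm_eq_abs] at t2
      have hA2 : |A y k k| ≤ B 2 * ‖k‖ * ‖k‖ := by
        calc |A y k k| ≤ ‖A y k‖ * ‖k‖ := by
              rw [← Real.norm_eq_abs]; exact (A y k).le_opNorm k
          _ ≤ (‖A y‖ * ‖k‖) * ‖k‖ :=
              mul_le_mul_of_nonneg_right ((A y).le_opNorm k) (norm_nonneg k)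
          _ ≤ (B 2 * ‖k‖) * ‖k‖ :=
              mul_le_mul_of_nonneg_right
                (mul_le_mul_of_nonneg_right (hM2 y) (norm_nonneg k)) (norm_nonneg k)
          _ = B 2 * ‖k‖ * ‖k‖ := by ring
      have htri : |R y k| ≤ |f (y + k) - f y - f' y k| + 2⁻¹ * |A y k k| := by
        rw [hR]
        have := abs_add_le (f (y + k) - f y - f' y k) (-(2⁻¹ * (A y k k)))
        rw [abs_neg] at this
        calc |f (y + k) - f y - f' y k - 2⁻¹ * (A y k k)|
            = |f (y + k) - f y - f' y k + -(2⁻¹ * (A y k k))| := by ring_nf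
          _ ≤ |f (y + k) - f y - f' y k| + |2⁻¹ * (A y k k)| := this
          _ = |f (y + k) - f y - f' y k| + 2⁻¹ * |A y k k| := by
              rw [abs_mul]; norm_num
      calc |R y k| ≤ |f (y + k) - f y - f' y k| + 2⁻¹ * |A y k k| := htri
        _ ≤ B 2 * ‖k‖ * ‖k‖ + 2⁻¹ * (B 2 * ‖k‖ * ‖k‖) := by
            have h2 : 2⁻¹ * |A y k k| ≤ 2⁻¹ * (B 2 * ‖k‖ * ‖k‖) := by linarith
            linarith [t2]
        _ ≤ 2 * B 2 * (‖k‖ * ‖k‖) := by ring_nf; nlinarith [sq_nonneg ‖k‖, hB2]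
        _ ≤ 2 * B 2 * ‖k‖ ^ ((2:ℝ) + γ) :=
            mul_le_mul_of_nonneg_left (hpow2 _ (le_of_lt hk1)) (by linarith)
        _ ≤ K * ‖k‖ ^ ((2:ℝ) + γ) := by
            refine mul_le_mul_of_nonneg_right ?_ hrpow0
            rw [hK]; linarith
  -- base integrability
  have hsm_base : ∀ u : Euc d, AEStronglyMeasurable (fun ω' => f (u + Z ω')) μ := fun u =>
    (hfc.comp_stronglyMeasurable (hZm.const_add u).stronglyMeasurable).aestronglyMeasurable
  have hintf : ∀ u : Euc d, Integrable (fun ω' => f (u + Z ω')) μ := fun u =>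
    (integrable_const (B 0)).mono' (hsm_base u) (Filter.Eventually.of_forall fun ω' => hMf _)
  -- pointwise decomposition
  have hdecomp : ∀ ω, g (x + hv ω) - g x
      = Φx (hv ω) + 2⁻¹ * (Ψ (hv ω) (hv ω)) + ∫ ω', R (x + Z ω') (hv ω) ∂μ := by
    intro ω
    have e2 : ∀ ω', x + hv ω + Z ω' = (x + Z ω') + hv ω := fun ω' => by
      rw [add_right_comm]
    have i1 : Integrable (fun ω' => f ((x + Z ω') + hv ω)) μ :=
      (hintf (x + hv ω)).congr
        (Filter.Eventually.of_forall fun ω' => congrArg f (e2 ω'))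
    have ha : g (x + hv ω) = ∫ ω', f ((x + Z ω') + hv ω) ∂μ := by
      rw [hgdef]
      exact integral_congr_ae (Filter.Eventually.of_forall fun ω' => congrArg f (e2 ω'))
    have intL : Integrable (fun ω' => f' (x + Z ω') (hv ω)) μ :=
      ContinuousLinearMap.integrable_comp (𝕜 := ℝ) (E := ℝ) (H := Euc d →L[ℝ] ℝ)
        (ContinuousLinearMap.apply ℝ ℝ (hv ω)) hintf'
    have intQ : Integrable (fun ω' => A (x + Z ω') (hv ω) (hv ω)) μ :=
      ContinuousLinearMap.integrable_comp (𝕜 := ℝ) (E := ℝ) (H := Euc d →L[ℝ] ℝ)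
        (ContinuousLinearMap.apply ℝ ℝ (hv ω)) (hintAu (hv ω))
    have intQ' : Integrable (fun ω' => 2⁻¹ * (A (x + Z ω') (hv ω) (hv ω))) μ :=
      intQ.const_mul _
    have intR : Integrable (fun ω' => R (x + Z ω') (hv ω)) μ := by
      have hre : (fun ω' => R (x + Z ω') (hv ω))
          = fun ω' => (f ((x + Z ω') + hv ω) - f (x + Z ω') - f' (x + Z ω') (hv ω))
            - 2⁻¹ * (A (x + Z ω') (hv ω) (hv ω)) := by
        funext ω'; rw [hR]
      rw [hre]
      exact ((i1.sub (hintf x)).sub intL).sub intQ'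
    have hb : ∀ ω', f ((x + Z ω') + hv ω) - f (x + Z ω')
        = f' (x + Z ω') (hv ω) + 2⁻¹ * (A (x + Z ω') (hv ω) (hv ω))
          + R (x + Z ω') (hv ω) := by
      intro ω'; rw [hR]; ring
    have hsplit : g (x + hv ω) - g x
        = ((∫ ω', f' (x + Z ω') (hv ω) ∂μ)
          + (∫ ω', 2⁻¹ * (A (x + Z ω') (hv ω) (hv ω)) ∂μ))
          + ∫ ω', R (x + Z ω') (hv ω) ∂μ := by
      have hstep0 : g (x + hv ω) - g x
          = ∫ ω', (f ((x + Z ω') + hv ω) - f (x + Z ω')) ∂μ := by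
        rw [ha, show g x = ∫ ω', f (x + Z ω') ∂μ from rfl]
        exact (integral_sub i1 (hintf x)).symm
      rw [hstep0]
      calc ∫ ω', (f ((x + Z ω') + hv ω) - f (x + Z ω')) ∂μ
          = ∫ ω', (f' (x + Z ω') (hv ω) + 2⁻¹ * (A (x + Z ω') (hv ω) (hv ω))
              + R (x + Z ω') (hv ω)) ∂μ :=
            integral_congr_ae (Filter.Eventually.of_forall hb)
        _ = (∫ ω', (f' (x + Z ω') (hv ω) + 2⁻¹ * (A (x + Z ω') (hv ω) (hv ω))) ∂μ)
              + ∫ ω', R (x + Z ω') (hv ω) ∂μ := integral_add (intL.add intQ') intR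
        _ = ((∫ ω', f' (x + Z ω') (hv ω) ∂μ)
              + (∫ ω', 2⁻¹ * (A (x + Z ω') (hv ω) (hv ω)) ∂μ))
              + ∫ ω', R (x + Z ω') (hv ω) ∂μ := by
            rw [integral_add intL intQ']
    rw [hsplit]
    have hL : ∫ ω', f' (x + Z ω') (hv ω) ∂μ = Φx (hv ω) :=
      (ContinuousLinearMap.integral_apply hintf' (hv ω)).symm
    have hQ : ∫ ω', 2⁻¹ * (A (x + Z ω') (hv ω) (hv ω)) ∂μ
        = 2⁻¹ * (Ψ (hv ω) (hv ω)) := by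
      rw [integral_const_mul, hΨapp (hv ω) (hv ω)]
    rw [hL, hQ]
  set Rint : Ω → ℝ := fun ω => ∫ ω', R (x + Z ω') (hv ω) ∂μ with hRintdef
  -- global integrability over ω
  have hgb : ∀ ω, ‖g (x + hv ω)‖ ≤ B 0 := fun ω => by
    rw [hgdef]
    refine (norm_integral_le_of_norm_le_const
      (Filter.Eventually.of_forall fun ω' => hMf _)).trans ?_
    simp
  have i0 : Integrable (fun ω => g (x + hv ω)) μ :=
    (integrable_const (B 0)).mono'
      ((hgC.comp_stronglyMeasurable (hvm.const_add x).stronglyMeasurable).aestronglyMeasurable)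
      (Filter.Eventually.of_forall hgb)
  have hgint : Integrable (fun ω => g (x + hv ω) - g x) μ := i0.sub (integrable_const _)
  have iΦ : Integrable (fun ω => Φx (hv ω)) μ :=
    ContinuousLinearMap.integrable_comp (𝕜 := ℝ) (E := ℝ) (H := Euc d) Φx hhvint
  have hΨexp : ∀ u : Euc d, Ψ u u = ∑ i, ∑ j, u i * u j * Ψ (e i) (e j) := fun u =>
    clm_bilin_expand Ψ u u
  have iQ : Integrable (fun ω => 2⁻¹ * (Ψ (hv ω) (hv ω))) μ := by
    have hqrw : (fun ω => 2⁻¹ * (Ψ (hv ω) (hv ω)))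
        = fun ω => 2⁻¹ * ∑ i, ∑ j, hv ω i * hv ω j * Ψ (e i) (e j) := by
      funext ω; rw [hΨexp]
    rw [hqrw]
    exact (integrable_finset_sum _ fun i _ => integrable_finset_sum _ fun j _ =>
      (hhvij i j).mul_const _).const_mul _
  have iR : Integrable Rint μ := by
    have hrr : Rint = fun ω => (g (x + hv ω) - g x) - Φx (hv ω)
        - 2⁻¹ * (Ψ (hv ω) (hv ω)) := by
      funext ω; rw [hRintdef]
      have := hdecomp ω
      simp only []
      linarith [this]
    rw [hrr]
    exact (hgint.sub iΦ).sub iQ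
  -- integral identities
  have hIΦ : ∫ ω, Φx (hv ω) ∂μ = 0 := by
    rw [ContinuousLinearMap.integral_comp_comm Φx hhvint, hhv0, map_zero]
  have hIQ : ∫ ω, 2⁻¹ * (Ψ (hv ω) (hv ω)) ∂μ
      = 2⁻¹ * ((n:ℝ)⁻¹ * ∑ i, ∑ j, S i j * Ψ (e i) (e j)) := by
    rw [integral_const_mul]
    congr 1
    calc ∫ ω, Ψ (hv ω) (hv ω) ∂μ
        = ∫ ω, ∑ i, ∑ j, hv ω i * hv ω j * Ψ (e i) (e j) ∂μ :=
          integral_congr_ae (Filter.Eventually.of_forall fun ω => hΨexp _)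
      _ = ∑ i, ∫ ω, ∑ j, hv ω i * hv ω j * Ψ (e i) (e j) ∂μ :=
          integral_finset_sum _ fun i _ =>
            integrable_finset_sum _ fun j _ => (hhvij i j).mul_const _
      _ = ∑ i, ∑ j, ∫ ω, hv ω i * hv ω j * Ψ (e i) (e j) ∂μ :=
          Finset.sum_congr rfl fun i _ =>
            integral_finset_sum _ fun j _ => (hhvij i j).mul_const _
      _ = ∑ i, ∑ j, ((n:ℝ)⁻¹ * S i j) * Ψ (e i) (e j) := by
          refine Finset.sum_congr rfl fun i _ => Finset.sum_congr rfl fun j _ => ?_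
          rw [integral_mul_const, hhvij_int i j]
      _ = (n:ℝ)⁻¹ * ∑ i, ∑ j, S i j * Ψ (e i) (e j) := by
          rw [Finset.mul_sum]
          refine Finset.sum_congr rfl fun i _ => ?_
          rw [Finset.mul_sum]
          exact Finset.sum_congr rfl fun j _ => by ring
  have hD : ∫ ω, (g (x + hv ω) - g x) ∂μ
      = 2⁻¹ * ((n:ℝ)⁻¹ * ∑ i, ∑ j, S i j * Ψ (e i) (e j)) + ∫ ω, Rint ω ∂μ := by
    calc ∫ ω, (g (x + hv ω) - g x) ∂μ
        = ∫ ω, (Φx (hv ω) + 2⁻¹ * (Ψ (hv ω) (hv ω)) + Rint ω) ∂μ :=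
          integral_congr_ae (Filter.Eventually.of_forall fun ω => hdecomp ω)
      _ = (∫ ω, (Φx (hv ω) + 2⁻¹ * (Ψ (hv ω) (hv ω))) ∂μ) + ∫ ω, Rint ω ∂μ :=
          integral_add (iΦ.add iQ) iR
      _ = ((∫ ω, Φx (hv ω) ∂μ) + ∫ ω, 2⁻¹ * (Ψ (hv ω) (hv ω)) ∂μ) + ∫ ω, Rint ω ∂μ := by
          rw [integral_add iΦ iQ]
      _ = _ := by rw [hIΦ, hIQ]; ring
  -- trace identity
  have htr : Matrix.trace (S * hessian g x) = ∑ i, ∑ j, S i j * Ψ (e i) (e j) := by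
    have h1 : Matrix.trace (S * hessian g x) = ∑ i, ∑ j, S i j * Ψ (e j) (e i) := by
      rw [Matrix.trace]
      refine Finset.sum_congr rfl fun i _ => ?_
      rw [Matrix.diag_apply, Matrix.mul_apply]
      exact Finset.sum_congr rfl fun j _ => by rw [hhess j i]
    rw [h1, Finset.sum_comm]
    refine Finset.sum_congr rfl fun j _ => Finset.sum_congr rfl fun i _ => ?_
    rw [hSsymm i j]
  -- final computation
  have hnne : (n:ℝ) ≠ 0 := ne_of_gt hn0
  have hmain_eq : (n:ℝ) * ∫ ω, (g (x + hv ω) - g x) ∂μ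
      - Matrix.trace (S * hessian g x) / 2 = (n:ℝ) * ∫ ω, Rint ω ∂μ := by
    rw [hD, htr]
    field_simp
    ring
  have hRintb : ∀ ω, ‖Rint ω‖ ≤ K * ‖hv ω‖ ^ ((2:ℝ) + γ) := by
    intro ω
    rw [hRintdef]
    refine (norm_integral_le_of_norm_le_const (C := K * ‖hv ω‖ ^ ((2:ℝ) + γ))
      (Filter.Eventually.of_forall fun ω' => by
        rw [Real.norm_eq_abs]; exact hRb _ _)).trans ?_
    simp
  have hhvnorm : ∀ ω, ‖hv ω‖ ^ ((2:ℝ) + γ) = c ^ ((2:ℝ) + γ) * ‖Y ω‖ ^ ((2:ℝ) + γ) := by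
    intro ω
    show ‖c • Y ω‖ ^ _ = _
    rw [norm_smul, Real.norm_eq_abs, abs_of_pos hc0,
      Real.mul_rpow (le_of_lt hc0) (norm_nonneg _)]
  have hmomhv : Integrable (fun ω => K * ‖hv ω‖ ^ ((2:ℝ) + γ)) μ := by
    have hrw : (fun ω => K * ‖hv ω‖ ^ ((2:ℝ) + γ))
        = fun ω => (K * c ^ ((2:ℝ) + γ)) * ‖Y ω‖ ^ ((2:ℝ) + γ) := by
      funext ω; rw [hhvnorm ω]; ring
    rw [hrw]
    exact hmom.const_mul _
  set I : ℝ := ∫ ω, ‖Y ω‖ ^ ((2:ℝ) + γ) ∂μ with hI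
  have hIpos : 0 ≤ I := integral_nonneg fun ω => Real.rpow_nonneg (norm_nonneg _) _
  have h7 : ‖∫ ω, Rint ω ∂μ‖ ≤ K * (c ^ ((2:ℝ) + γ) * I) := by
    refine (norm_integral_le_of_norm_le hmomhv
      (Filter.Eventually.of_forall hRintb)).trans ?_
    rw [show (fun ω => K * ‖hv ω‖ ^ ((2:ℝ) + γ))
        = fun ω => (K * c ^ ((2:ℝ) + γ)) * ‖Y ω‖ ^ ((2:ℝ) + γ) from
      funext fun ω => by rw [hhvnorm ω]; ring]
    rw [integral_const_mul]
    rw [hI]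
    ring_nf
    exact le_refl _
  have hcexp : (n:ℝ) * c ^ ((2:ℝ) + γ) = (n:ℝ) ^ (-(γ / 2)) := by
    have hs : Real.sqrt (n:ℝ) = (n:ℝ) ^ ((1:ℝ)/2) := Real.sqrt_eq_rpow _
    calc (n:ℝ) * c ^ ((2:ℝ) + γ)
        = (n:ℝ) ^ (1:ℝ) * ((n:ℝ) ^ (-((1:ℝ)/2))) ^ ((2:ℝ) + γ) := by
          rw [Real.rpow_one, hc, hs, ← Real.rpow_neg (le_of_lt hn0)]
      _ = (n:ℝ) ^ (1:ℝ) * (n:ℝ) ^ ((-((1:ℝ)/2)) * ((2:ℝ) + γ)) := by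
          rw [← Real.rpow_mul (le_of_lt hn0)]
      _ = (n:ℝ) ^ ((1:ℝ) + (-((1:ℝ)/2)) * ((2:ℝ) + γ)) := (Real.rpow_add hn0 _ _).symm
      _ = (n:ℝ) ^ (-(γ / 2)) := by ring_nf
  have hck0 : 0 ≤ ckNorm 3 f := le_trans (hB0 0 (by norm_num)) (hBck 0 (by norm_num))
  have h8 : K ≤ 3 * ckNorm 3 f := by
    have h2 := hBck 2 (by norm_num)
    have h3 := hBck 3 (by norm_num)
    rw [hK]; linarith
  have hrpown : (0:ℝ) ≤ (n:ℝ) ^ (-(γ / 2)) := Real.rpow_nonneg (le_of_lt hn0) _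
  have main : |(n:ℝ) * ∫ ω, (g (x + hv ω) - g x) ∂μ
      - Matrix.trace (S * hessian g x) / 2|
      ≤ 3 * ckNorm 3 f * I * (n:ℝ) ^ (-(γ / 2)) := by
    rw [hmain_eq]
    calc |(n:ℝ) * ∫ ω, Rint ω ∂μ| = (n:ℝ) * |∫ ω, Rint ω ∂μ| := by
          rw [abs_mul, abs_of_pos hn0]
      _ ≤ (n:ℝ) * (K * (c ^ ((2:ℝ) + γ) * I)) := by
          refine mul_le_mul_of_nonneg_left ?_ (le_of_lt hn0)
          rw [← Real.norm_eq_abs]; exact h7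
      _ = K * I * ((n:ℝ) * c ^ ((2:ℝ) + γ)) := by ring
      _ = K * I * (n:ℝ) ^ (-(γ / 2)) := by rw [hcexp]
      _ ≤ 3 * ckNorm 3 f * I * (n:ℝ) ^ (-(γ / 2)) := by
          refine mul_le_mul_of_nonneg_right ?_ hrpown
          exact mul_le_mul_of_nonneg_right h8 hIpos
  exact main


/-- **Consistency of the scheme (quantitative)**: there is a constant `C` depending only on
`d` such that for every `f ∈ C³(ℝ^d)`, every `T > 0`, every `γ ∈ (0,1]` (with finite `2+γ`
moment) and every `n ≥ 1`, for all `(x,t) ∈ ℝ^d × [0,T]`,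
`|E[(u_n(x + n^{-1/2} X_{⌊nt⌋+1}, t) − u_n(x,t))/n^{-1}] − ½ tr(Σ D²u_n(x,t))|
  ≤ C ‖f‖_{C³} E[|X₁|^{2+γ}] n^{-γ/2}`. -/
theorem scheme_consistency_quantitative
    {d : ℕ} (hd : 1 ≤ d) {Ω : Type} [MeasurableSpace Ω] (μ : Measure Ω)
    [IsProbabilityMeasure μ] (X : ℕ → Ω → Euc d) (S : Matrix (Fin d) (Fin d) ℝ)
    (hX : IsIIDCentered μ X S) :
    ∃ C : ℝ, 0 < C ∧ ∀ f : Euc d → ℝ, MemCk 3 f → ∀ T > (0:ℝ), ∀ γ ∈ Set.Ioc (0:ℝ) 1,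
      ∀ n : ℕ, 1 ≤ n → Integrable (fun ω => ‖X 0 ω‖ ^ ((2:ℝ) + γ)) μ →
      ∀ x : Euc d, ∀ t ∈ Set.Icc (0:ℝ) T,
      |(n : ℝ) * ∫ ω, (schemeU μ X f n (x + (Real.sqrt n)⁻¹ • X ⌊(n : ℝ) * t⌋₊ ω) t -
            schemeU μ X f n x t) ∂μ -
          Matrix.trace (S * hessian (fun y => schemeU μ X f n y t) x) / 2| ≤
        C * ckNorm 3 f * (∫ ω, ‖X 0 ω‖ ^ ((2:ℝ) + γ) ∂μ) * (n : ℝ) ^ (-(γ / 2)) := by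
  refine ⟨3, by norm_num, ?_⟩
  intro f hf T hT γ hγ n hn hmom x t ht
  set m : ℕ := ⌊(n : ℝ) * t⌋₊ with hm
  set Y : Ω → Euc d := X m with hY
  have hYm : Measurable Y := hX.meas m
  have hWm : Measurable (pSum X m) := by
    unfold pSum
    exact Finset.measurable_sum _ (fun i _ => hX.meas i)
  have hmap : μ.map Y = μ.map (X 0) := hX.ident m
  have hY2 : MemLp Y 2 μ := by
    have h0 : MemLp id 2 (μ.map (X 0)) :=
      (memLp_map_measure_iff aestronglyMeasurable_id (hX.meas 0).aemeasurable).mpr hX.sqInt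
    rw [← hmap] at h0
    exact (memLp_map_measure_iff aestronglyMeasurable_id hYm.aemeasurable).mp h0
  have hY0 : ∫ ω, Y ω ∂μ = 0 := by
    calc ∫ ω, Y ω ∂μ = ∫ y, y ∂(μ.map Y) :=
          (integral_map hYm.aemeasurable aestronglyMeasurable_id).symm
      _ = ∫ y, y ∂(μ.map (X 0)) := by rw [hmap]
      _ = ∫ ω, X 0 ω ∂μ := integral_map (hX.meas 0).aemeasurable aestronglyMeasurable_id
      _ = 0 := hX.centered
  have coordcont : ∀ i j : Fin d, Continuous (fun y : Euc d => y i * y j) := fun i j =>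
    by fun_prop
  have hScov : ∀ i j, ∫ ω, Y ω i * Y ω j ∂μ = S i j := by
    intro i j
    calc ∫ ω, Y ω i * Y ω j ∂μ = ∫ y, y i * y j ∂(μ.map Y) :=
          (integral_map hYm.aemeasurable (coordcont i j).aestronglyMeasurable).symm
      _ = ∫ y, y i * y j ∂(μ.map (X 0)) := by rw [hmap]
      _ = ∫ ω, X 0 ω i * X 0 ω j ∂μ :=
          integral_map (hX.meas 0).aemeasurable (coordcont i j).aestronglyMeasurable
      _ = S i j := by rw [← hX.covEq]; rfl
  have hSsymm : ∀ i j, S i j = S j i := by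
    intro i j
    rw [← hX.covEq]
    show ∫ ω, X 0 ω i * X 0 ω j ∂μ = ∫ ω, X 0 ω j * X 0 ω i ∂μ
    exact integral_congr_ae (Filter.Eventually.of_forall fun ω => mul_comm _ _)
  have momcont : Continuous (fun y : Euc d => ‖y‖ ^ ((2:ℝ) + γ)) :=
    continuous_norm.rpow_const (fun y => Or.inr (by linarith [hγ.1]))
  have hmomY : Integrable (fun ω => ‖Y ω‖ ^ ((2:ℝ) + γ)) μ := by
    have h2 : Integrable (fun y : Euc d => ‖y‖ ^ ((2:ℝ) + γ)) (μ.map (X 0)) :=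
      (integrable_map_measure momcont.aestronglyMeasurable (hX.meas 0).aemeasurable).mpr hmom
    rw [← hmap] at h2
    exact (integrable_map_measure momcont.aestronglyMeasurable hYm.aemeasurable).mp h2
  have hmomeq : ∫ ω, ‖Y ω‖ ^ ((2:ℝ) + γ) ∂μ = ∫ ω, ‖X 0 ω‖ ^ ((2:ℝ) + γ) ∂μ := by
    calc ∫ ω, ‖Y ω‖ ^ ((2:ℝ) + γ) ∂μ = ∫ y, ‖y‖ ^ ((2:ℝ) + γ) ∂(μ.map Y) :=
          (integral_map hYm.aemeasurable momcont.aestronglyMeasurable).symm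
      _ = ∫ y, ‖y‖ ^ ((2:ℝ) + γ) ∂(μ.map (X 0)) := by rw [hmap]
      _ = ∫ ω, ‖X 0 ω‖ ^ ((2:ℝ) + γ) ∂μ :=
          integral_map (hX.meas 0).aemeasurable momcont.aestronglyMeasurable
  have key := key_estimate μ f hf hγ hn Y hYm (pSum X m) hWm S hY2 hY0 hScov hSsymm hmomY x
  rw [hmomeq] at key
  exact key

end
end
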